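/- arXiv:2403.20049 — 5 statements merged into one kernel-verified Lean document; each statement's English description precedes it below -/
import Mathlib

section
/- If two cycles of length g in G intersect and their intersection contains at least one edge, then the intersection is a connected subgraph. Moreover, if g is odd, the intersection of any two cycles of length g in G is connected or empty. -/
open SimpleGraph

namespace EGRAux

variable {V : Type*} {G : SimpleGraph V}

lemma girth_le_len {a : V} {w : G.Walk a a} (hc : w.IsCycle) : G.girth ≤ w.length := by
  have h : G.egirth ≤ (w.length : ℕ∞) := by
    refine iInf_le_of_le a ?_
    refine iInf_le_of_le w ?_
    exact iInf_le _ hc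
  have := ENat.toNat_le_toNat h (by simp)
  simpa [SimpleGraph.girth] using this

lemma exists_cycle_le {x y : V} (p q : G.Walk x y) (hp : p.IsPath) (hq : q.IsPath)
    (hne : p ≠ q) :
    ∃ (a : V) (c : G.Walk a a), c.IsCycle ∧ c.length ≤ p.length + q.length := by
  classical
  set H : G.Subgraph := p.toSubgraph ⊔ q.toSubgraph with hH
  have hEdge : H.spanningCoe.edgeSet = H.edgeSet := by
    ext e
    induction e using Sym2.ind with
    | _ a b => simp [Subgraph.mem_edgeSet, SimpleGraph.mem_edgeSet, Subgraph.spanningCoe]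
  have hpe : ∀ e ∈ p.edges, e ∈ H.spanningCoe.edgeSet := by
    intro e he
    rw [hEdge, hH, Subgraph.edgeSet_sup]
    exact Or.inl (by rw [Walk.edgeSet_toSubgraph]; exact he)
  have hqe : ∀ e ∈ q.edges, e ∈ H.spanningCoe.edgeSet := by
    intro e he
    rw [hEdge, hH, Subgraph.edgeSet_sup]
    exact Or.inr (by rw [Walk.edgeSet_toSubgraph]; exact he)
  have hback : ∀ {u v : V} (r : H.spanningCoe.Walk u v), ∀ e ∈ r.edges, e ∈ G.edgeSet :=
    fun r e he => (edgeSet_mono H.spanningCoe_le) (r.edges_subset_edgeSet he)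
  have hne' : p.transfer H.spanningCoe hpe ≠ q.transfer H.spanningCoe hqe := by
    intro h
    apply hne
    have h2 := congrArg (fun r : H.spanningCoe.Walk x y => r.transfer G (hback r)) h
    simpa only [Walk.transfer_transfer, Walk.transfer_self] using h2
  have hnac : ¬ H.spanningCoe.IsAcyclic := by
    intro hac
    exact hne' (congrArg Subtype.val
      (hac.path_unique ⟨_, hp.transfer hpe⟩ ⟨_, hq.transfer hqe⟩))
  simp only [SimpleGraph.IsAcyclic, not_forall, not_not] at hnac
  obtain ⟨a, c, hc⟩ := hnac
  refine ⟨a, c.transfer G (hback c), hc.transfer _, ?_⟩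
  have hnd : c.edges.Nodup := hc.isCircuit.isTrail.edges_nodup
  have hsub : c.edges ⊆ p.edges ++ q.edges := by
    intro e he
    have h1 : e ∈ H.spanningCoe.edgeSet := c.edges_subset_edgeSet he
    rw [hEdge, hH, Subgraph.edgeSet_sup] at h1
    rcases h1 with h1 | h1
    · rw [Walk.edgeSet_toSubgraph] at h1; exact List.mem_append.2 (Or.inl h1)
    · rw [Walk.edgeSet_toSubgraph] at h1; exact List.mem_append.2 (Or.inr h1)
  calc (c.transfer G (hback c)).length = c.length := Walk.length_transfer _ _
    _ = c.edges.length := (Walk.length_edges c).symm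
    _ ≤ (p.edges ++ q.edges).length := (hnd.subperm hsub).length_le
    _ = p.length + q.length := by simp [Walk.length_edges]

lemma arcs {x y : V} {w : G.Walk x x} (hc : w.IsCycle) (hy : y ∈ w.support) (hxy : y ≠ x) :
    ∃ (p q : G.Walk x y), p.IsPath ∧ q.IsPath ∧ p.toSubgraph ≤ w.toSubgraph ∧
      q.toSubgraph ≤ w.toSubgraph ∧ p.length + q.length = w.length ∧ w.getVert p.length = y := by
  classical
  set t := w.takeUntil y hy with ht
  set d := w.dropUntil y hy with hd
  have hspec : t.append d = w := w.take_spec hy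
  have hsupp : t.support ++ d.support.tail = w.support := by
    rw [← Walk.support_append, hspec]
  have htail : t.support.tail ++ d.support.tail = w.support.tail := by
    have h2 := hsupp
    rw [t.support_eq_cons, w.support_eq_cons, List.cons_append] at h2
    injection h2
  have hnd : (t.support.tail ++ d.support.tail).Nodup := htail ▸ hc.support_nodup
  obtain ⟨nd₁, nd₂, hdisj⟩ := List.nodup_append.mp hnd
  have hxd : x ∈ d.support.tail := Walk.end_mem_tail_support_of_ne hxy d
  have hyt : y ∈ t.support.tail := Walk.end_mem_tail_support_of_ne (Ne.symm hxy) t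
  have hpt : t.IsPath := by
    rw [Walk.isPath_def, t.support_eq_cons]
    exact List.nodup_cons.mpr ⟨fun hx => hdisj _ hx _ hxd rfl, nd₁⟩
  have hpd : d.IsPath := by
    rw [Walk.isPath_def, d.support_eq_cons]
    exact List.nodup_cons.mpr ⟨fun hyd => hdisj _ hyt _ hyd rfl, nd₂⟩
  have hsubsum : t.toSubgraph ⊔ d.toSubgraph = w.toSubgraph := by
    rw [← Walk.toSubgraph_append, hspec]
  refine ⟨t, d.reverse, hpt, hpd.reverse, ?_, ?_, ?_, ?_⟩
  · exact le_sup_left.trans hsubsum.le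
  · rw [Walk.toSubgraph_reverse]; exact le_sup_right.trans hsubsum.le
  · rw [Walk.length_reverse]
    have h3 := congrArg Walk.length hspec
    rwa [Walk.length_append] at h3
  · conv_lhs => rw [← hspec]
    rw [Walk.getVert_append]
    simp

lemma key {g : ℕ} (hg : G.girth = g) {H₁ H₂ : G.Subgraph} {x y : V}
    (p q : G.Walk x y) (hp : p.IsPath) (hq : q.IsPath)
    (h₁ : p.toSubgraph ≤ H₁) (h₂ : q.toSubgraph ≤ H₂) (hlen : p.length + q.length < g) :
    ∃ r : G.Walk x y, r.toSubgraph ≤ H₁ ⊓ H₂ := by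
  by_cases hpq : p = q
  · subst hpq; exact ⟨p, le_inf h₁ h₂⟩
  · obtain ⟨a, c, hc, hcl⟩ := exists_cycle_le p q hp hq hpq
    have h3 := girth_le_len hc
    omega

lemma step {g : ℕ} (hg : G.girth = g) {x y : V} {w₁ w₂ : G.Walk x x}
    (hc₁ : w₁.IsCycle) (hc₂ : w₂.IsCycle) (hl₁ : w₁.length = g) (hl₂ : w₂.length = g)
    (hy₁ : y ∈ w₁.support) (hy₂ : y ∈ w₂.support) (hxy : y ≠ x) :
    (∃ r : G.Walk x y, r.toSubgraph ≤ w₁.toSubgraph ⊓ w₂.toSubgraph) ∨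
      (Even g ∧ w₁.getVert (g / 2) = y ∧ w₂.getVert (g / 2) = y) := by
  obtain ⟨p₁, q₁, hp₁, hq₁, hs₁, hs₁', hlen₁, hgv₁⟩ := arcs hc₁ hy₁ hxy
  obtain ⟨p₂, q₂, hp₂, hq₂, hs₂, hs₂', hlen₂, hgv₂⟩ := arcs hc₂ hy₂ hxy
  rw [hl₁] at hlen₁
  rw [hl₂] at hlen₂
  by_cases hcase : min p₁.length q₁.length + min p₂.length q₂.length < g
  · obtain ⟨s₁, hsp₁, hss₁, hsl₁⟩ : ∃ s : G.Walk x y, s.IsPath ∧ s.toSubgraph ≤ w₁.toSubgraph ∧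
        s.length = min p₁.length q₁.length := by
      rcases le_total p₁.length q₁.length with h | h
      · exact ⟨p₁, hp₁, hs₁, (min_eq_left h).symm⟩
      · exact ⟨q₁, hq₁, hs₁', (min_eq_right h).symm⟩
    obtain ⟨s₂, hsp₂, hss₂, hsl₂⟩ : ∃ s : G.Walk x y, s.IsPath ∧ s.toSubgraph ≤ w₂.toSubgraph ∧
        s.length = min p₂.length q₂.length := by
      rcases le_total p₂.length q₂.length with h | h
      · exact ⟨p₂, hp₂, hs₂, (min_eq_left h).symm⟩
      · exact ⟨q₂, hq₂, hs₂', (min_eq_right h).symm⟩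
    exact Or.inl (key hg s₁ s₂ hsp₁ hsp₂ hss₁ hss₂ (by omega))
  · right
    have e₁ : p₁.length = g / 2 := by omega
    have e₂ : p₂.length = g / 2 := by omega
    refine ⟨Nat.even_iff.mpr (by omega), ?_, ?_⟩
    · rw [← e₁]; exact hgv₁
    · rw [← e₂]; exact hgv₂

lemma mem_tail_of_mem {b z : V} {u : G.Walk b b} (hnil : ¬u.Nil) (hz : z ∈ u.support) :
    z ∈ u.support.tail := by
  obtain ⟨v', h', q, rfl⟩ := Walk.not_nil_iff.mp hnil
  rw [Walk.support_cons] at hz ⊢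
  rcases List.mem_cons.mp hz with rfl | hz
  · exact q.end_mem_support
  · exact hz

lemma rotate_stuff [DecidableEq V] {a x : V} {w : G.Walk a a} (hc : w.IsCycle) (hx : x ∈ w.support) :
    (w.rotate x hx).IsCycle ∧ (w.rotate x hx).length = w.length ∧
      (w.rotate x hx).toSubgraph = w.toSubgraph ∧ ∀ z ∈ w.support, z ∈ (w.rotate x hx).support := by
  classical
  have hnil : ¬w.Nil := by
    rw [Walk.not_nil_iff_lt_length]
    have := hc.three_le_length
    omega
  refine ⟨hc.rotate hx, ?_, w.toSubgraph_rotate hx, ?_⟩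
  · have h1 := (w.rotate_edges x hx).perm.length_eq
    rw [Walk.length_edges, Walk.length_edges] at h1
    exact h1
  · intro z hz
    have h2 : z ∈ w.support.tail := mem_tail_of_mem hnil hz
    have h3 : z ∈ (w.rotate x hx).support.tail := ((w.support_rotate x hx).mem_iff).mpr h2
    exact List.mem_of_mem_tail h3

end EGRAux
/-- `c` is a cycle subgraph of `G` of length `g`. -/
def IsCycleSub {V : Type*} (G : SimpleGraph V) (g : ℕ) (c : G.Subgraph) : Prop :=
  ∃ (a : V) (w : G.Walk a a), w.IsCycle ∧ w.length = g ∧ c = w.toSubgraph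

/-- `p` is a path subgraph of `G` on `n` vertices. -/
def IsPathSub {V : Type*} (G : SimpleGraph V) (n : ℕ) (p : G.Subgraph) : Prop :=
  ∃ (a b : V) (w : G.Walk a b), w.IsPath ∧ w.length + 1 = n ∧ p = w.toSubgraph

/-- `G` is an edge-girth-regular `(v,k,g,λ)`-graph. -/
def IsEGR {V : Type*} (G : SimpleGraph V) (v k g lam : ℕ) : Prop :=
  Nat.card V = v ∧ (∀ x : V, (G.neighborSet x).ncard = k) ∧ G.girth = g ∧
  ∀ e ∈ G.edgeSet,
    {c : G.Subgraph | IsCycleSub G g c ∧ e ∈ c.edgeSet}.ncard = lam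

open EGRAux in
/-- In an egr(v,k,g,λ)-graph, if two shortest cycles intersect in at least one edge then
the intersection is connected; if g is odd the intersection is connected or empty. -/
theorem stmt_2 {V : Type*} (G : SimpleGraph V) (v k g lam : ℕ)
    (hG : IsEGR G v k g lam)
    (c₁ c₂ : G.Subgraph) (h₁ : IsCycleSub G g c₁) (h₂ : IsCycleSub G g c₂) :
    ((c₁ ⊓ c₂).edgeSet.Nonempty → (c₁ ⊓ c₂).Connected) ∧
    (Odd g → (c₁ ⊓ c₂).Connected ∨ (c₁ ⊓ c₂).verts = ∅) := by
  classical
  obtain ⟨hv, hk, hg, hlam⟩ := hG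
  obtain ⟨a₁, w₁, hc₁, hl₁, rfl⟩ := h₁
  obtain ⟨a₂, w₂, hc₂, hl₂, rfl⟩ := h₂
  have hmem : ∀ z : V, z ∈ (w₁.toSubgraph ⊓ w₂.toSubgraph).verts ↔
      z ∈ w₁.support ∧ z ∈ w₂.support := by
    intro z
    rw [SimpleGraph.Subgraph.verts_inf, Set.mem_inter_iff,
      Walk.mem_verts_toSubgraph, Walk.mem_verts_toSubgraph]
  have step' : ∀ (x : V) (hx₁ : x ∈ w₁.support) (hx₂ : x ∈ w₂.support) (y : V),
      y ∈ w₁.support → y ∈ w₂.support → y ≠ x →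
      (∃ r : G.Walk x y, r.toSubgraph ≤ w₁.toSubgraph ⊓ w₂.toSubgraph) ∨
      (Even g ∧ (w₁.rotate x hx₁).getVert (g / 2) = y ∧ (w₂.rotate x hx₂).getVert (g / 2) = y) := by
    intro x hx₁ hx₂ y hy₁ hy₂ hyx
    obtain ⟨r₁c, r₁l, r₁s, r₁m⟩ := rotate_stuff hc₁ hx₁
    obtain ⟨r₂c, r₂l, r₂s, r₂m⟩ := rotate_stuff hc₂ hx₂
    have h3 := step hg r₁c r₂c (r₁l.trans hl₁) (r₂l.trans hl₂) (r₁m y hy₁) (r₂m y hy₂) hyx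
    rwa [r₁s, r₂s] at h3
  have nilsub : ∀ x : V, x ∈ w₁.support → x ∈ w₂.support →
      (Walk.nil : G.Walk x x).toSubgraph ≤ w₁.toSubgraph ⊓ w₂.toSubgraph := by
    intro x hx1 hx2
    show G.singletonSubgraph x ≤ _
    rw [SimpleGraph.singletonSubgraph_le_iff]
    exact (hmem x).mpr ⟨hx1, hx2⟩
  constructor
  · rintro ⟨e, he⟩
    induction e using Sym2.ind with
    | _ u v =>
    have huv : (w₁.toSubgraph ⊓ w₂.toSubgraph).Adj u v := SimpleGraph.Subgraph.mem_edgeSet.mp he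
    have hu : u ∈ (w₁.toSubgraph ⊓ w₂.toSubgraph).verts :=
      (w₁.toSubgraph ⊓ w₂.toSubgraph).edge_vert huv
    have hvv : v ∈ (w₁.toSubgraph ⊓ w₂.toSubgraph).verts :=
      (w₁.toSubgraph ⊓ w₂.toSubgraph).edge_vert huv.symm
    obtain ⟨hu1, hu2⟩ := (hmem u).mp hu
    obtain ⟨hv1, hv2⟩ := (hmem v).mp hvv
    have hune : u ≠ v := huv.adj_sub.ne
    have hew : (Walk.cons huv.symm.adj_sub Walk.nil : G.Walk v u).toSubgraph ≤
        w₁.toSubgraph ⊓ w₂.toSubgraph := by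
      rw [Walk.toSubgraph_cons_nil_eq_subgraphOfAdj]
      exact SimpleGraph.subgraphOfAdj_le_of_adj _ huv.symm
    have toU : ∀ x, x ∈ w₁.support → x ∈ w₂.support →
        ∃ r : G.Walk x u, r.toSubgraph ≤ w₁.toSubgraph ⊓ w₂.toSubgraph := by
      intro x hx1 hx2
      by_cases hxu : x = u
      · subst hxu; exact ⟨Walk.nil, nilsub x hx1 hx2⟩
      by_cases hxv : x = v
      · subst hxv; exact ⟨Walk.cons huv.symm.adj_sub Walk.nil, hew⟩
      rcases step' x hx1 hx2 u hu1 hu2 (fun h => hxu h.symm) with ⟨r, hr⟩ | ⟨hev, hgu₁, hgu₂⟩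
      · exact ⟨r, hr⟩
      rcases step' x hx1 hx2 v hv1 hv2 (fun h => hxv h.symm) with ⟨r, hr⟩ | ⟨_, hgv₁, _⟩
      · refine ⟨r.append (Walk.cons huv.symm.adj_sub Walk.nil), ?_⟩
        rw [Walk.toSubgraph_append]
        exact sup_le hr hew
      · exact absurd (hgu₁.symm.trans hgv₁) hune
    rw [SimpleGraph.Subgraph.connected_iff_forall_exists_walk_subgraph]
    refine ⟨⟨u, hu⟩, ?_⟩
    intro s t hs ht
    obtain ⟨hs1, hs2⟩ := (hmem s).mp hs
    obtain ⟨ht1, ht2⟩ := (hmem t).mp ht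
    obtain ⟨r₁, hr₁⟩ := toU s hs1 hs2
    obtain ⟨r₂, hr₂⟩ := toU t ht1 ht2
    refine ⟨r₁.append r₂.reverse, ?_⟩
    rw [Walk.toSubgraph_append, Walk.toSubgraph_reverse]
    exact sup_le hr₁ hr₂
  · intro hodd
    by_cases hempty : (w₁.toSubgraph ⊓ w₂.toSubgraph).verts = ∅
    · exact Or.inr hempty
    left
    obtain ⟨z, hz⟩ := Set.nonempty_iff_ne_empty.mpr hempty
    rw [SimpleGraph.Subgraph.connected_iff_forall_exists_walk_subgraph]
    refine ⟨⟨z, hz⟩, ?_⟩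
    intro s t hs ht
    obtain ⟨hs1, hs2⟩ := (hmem s).mp hs
    obtain ⟨ht1, ht2⟩ := (hmem t).mp ht
    by_cases hst : t = s
    · subst hst; exact ⟨Walk.nil, nilsub _ hs1 hs2⟩
    rcases step' s hs1 hs2 t ht1 ht2 hst with ⟨r, hr⟩ | ⟨hev, _, _⟩
    · exact ⟨r, hr⟩
    · exact absurd hev (Nat.not_even_iff_odd.mpr hodd)
end

section
/- Every path subgraph of G on 3 vertices is contained in exactly t cycles of length g. -/
open SimpleGraph

section Helpers

open SimpleGraph.Walk

variable {V : Type*} {G : SimpleGraph V} {u v b : V}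

private lemma getVert_eq_support_getElem (p : G.Walk u v) (i : ℕ) (h : i < p.support.length) :
    p.support[i] = p.getVert i := by
  induction p generalizing i with
  | nil => simp at h; simp [h]
  | cons hadj q ih =>
    cases i with
    | zero => simp
    | succ n =>
      simp only [support_cons, List.getElem_cons_succ, getVert_cons_succ]
      exact ih n (by simpa [Nat.succ_lt_succ_iff] using h)

private lemma cycle_getVert_inj {w : G.Walk b b} (hw : w.IsCycle) {i j : ℕ}
    (hi1 : 1 ≤ i) (hi2 : i ≤ w.length) (hj1 : 1 ≤ j) (hj2 : j ≤ w.length)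
    (h : w.getVert i = w.getVert j) : i = j := by
  have hsl : w.support.length = w.length + 1 := by simp [length_support]
  have htl : w.support.tail.length = w.length := by
    simp [List.length_tail, hsl]
  have h1 : w.support.tail[i-1]'(by omega) = w.getVert i := by
    rw [List.getElem_tail]
    rw [_root_.getVert_eq_support_getElem]
    congr 1; omega
  have h2 : w.support.tail[j-1]'(by omega) = w.getVert j := by
    rw [List.getElem_tail]
    rw [_root_.getVert_eq_support_getElem]
    congr 1; omega
  have hnd := hw.support_nodup
  have heq : i - 1 = j - 1 :=
    (hnd.getElem_inj_iff (hi := by omega) (hj := by omega)).mp (h1.trans (h.trans h2.symm))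
  omega

private lemma cycle_getVert_eq_start {w : G.Walk b b} (hw : w.IsCycle) {i : ℕ}
    (hi : i ≤ w.length) (h : w.getVert i = b) : i = 0 ∨ i = w.length := by
  by_cases h0 : i = 0
  · exact Or.inl h0
  · right
    exact cycle_getVert_inj hw (by omega) hi (by have := hw.three_le_length; omega) le_rfl
      (h.trans w.getVert_length.symm)

private lemma cycle_neighbors_ne {w : G.Walk b b} (hw : w.IsCycle) :
    w.getVert 1 ≠ w.getVert (w.length - 1) := by
  have h3 := hw.three_le_length
  intro h
  have := cycle_getVert_inj hw (le_refl 1) (by omega) (by omega) (by omega) h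
  omega

private lemma cycle_adj_start {w : G.Walk b b} (hw : w.IsCycle) (y : V) :
    w.toSubgraph.Adj b y ↔ y = w.getVert 1 ∨ y = w.getVert (w.length - 1) := by
  have h3 := hw.three_le_length
  constructor
  · intro hadj
    obtain ⟨i, hs, hi⟩ := (toSubgraph_adj_iff _).mp hadj
    rw [Sym2.eq_iff] at hs
    rcases hs with ⟨hib, hiy⟩ | ⟨hiy, hib⟩
    · have hi0 : i = 0 := by
        rcases cycle_getVert_eq_start hw (le_of_lt hi) hib with h | h
        · exact h
        · omega
      subst hi0
      exact Or.inl hiy.symm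
    · have : i + 1 = 0 ∨ i + 1 = w.length := cycle_getVert_eq_start hw (by omega) hib
      have hil : i = w.length - 1 := by omega
      subst hil
      exact Or.inr hiy.symm
  · rintro (rfl | rfl)
    · have := w.toSubgraph_adj_getVert (i := 0) (by omega)
      simpa using this
    · have := w.toSubgraph_adj_getVert (i := w.length - 1) (by omega)
      have h2 : w.length - 1 + 1 = w.length := by omega
      rw [h2, getVert_length] at this
      exact this.symm

private lemma exists_third {N : Set V} {a c : V} (hN : N.ncard = 3) (ha : a ∈ N) (hc : c ∈ N)
    (hac : a ≠ c) : ∃ d, d ≠ a ∧ d ≠ c ∧ N = {a, c, d} := by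
  obtain ⟨x, y, z, hxy, hxz, hyz, rfl⟩ := Set.ncard_eq_three.mp hN
  simp only [Set.mem_insert_iff, Set.mem_singleton_iff] at ha hc
  rcases ha with rfl | rfl | rfl
  · rcases hc with rfl | rfl | rfl
    · exact absurd rfl hac
    · exact ⟨z, by first | exact hxy | exact hxy.symm | exact hxz | exact hxz.symm | exact hyz | exact hyz.symm, by first | exact hxy | exact hxy.symm | exact hxz | exact hxz.symm | exact hyz | exact hyz.symm, by ext t; simp only [Set.mem_insert_iff, Set.mem_singleton_iff] <;> tauto⟩
    · exact ⟨y, by first | exact hxy | exact hxy.symm | exact hxz | exact hxz.symm | exact hyz | exact hyz.symm, by first | exact hxy | exact hxy.symm | exact hxz | exact hxz.symm | exact hyz | exact hyz.symm, by ext t; simp only [Set.mem_insert_iff, Set.mem_singleton_iff] <;> tauto⟩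
  · rcases hc with rfl | rfl | rfl
    · exact ⟨z, by first | exact hxy | exact hxy.symm | exact hxz | exact hxz.symm | exact hyz | exact hyz.symm, by first | exact hxy | exact hxy.symm | exact hxz | exact hxz.symm | exact hyz | exact hyz.symm, by ext t; simp only [Set.mem_insert_iff, Set.mem_singleton_iff] <;> tauto⟩
    · exact absurd rfl hac
    · exact ⟨x, by first | exact hxy | exact hxy.symm | exact hxz | exact hxz.symm | exact hyz | exact hyz.symm, by first | exact hxy | exact hxy.symm | exact hxz | exact hxz.symm | exact hyz | exact hyz.symm, by ext t; simp only [Set.mem_insert_iff, Set.mem_singleton_iff] <;> tauto⟩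
  · rcases hc with rfl | rfl | rfl
    · exact ⟨y, by first | exact hxy | exact hxy.symm | exact hxz | exact hxz.symm | exact hyz | exact hyz.symm, by first | exact hxy | exact hxy.symm | exact hxz | exact hxz.symm | exact hyz | exact hyz.symm, by ext t; simp only [Set.mem_insert_iff, Set.mem_singleton_iff] <;> tauto⟩
    · exact ⟨x, by first | exact hxy | exact hxy.symm | exact hxz | exact hxz.symm | exact hyz | exact hyz.symm, by first | exact hxy | exact hxy.symm | exact hxz | exact hxz.symm | exact hyz | exact hyz.symm, by ext t; simp only [Set.mem_insert_iff, Set.mem_singleton_iff] <;> tauto⟩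
    · exact absurd rfl hac

private lemma xor_other_edge {g : ℕ} {b x y z : V}
    (hN : G.neighborSet b = {x, y, z}) (hxy : x ≠ y) (hxz : x ≠ z) (hyz : y ≠ z)
    {c : G.Subgraph} (hc : IsCycleSub G g c) (hx : s(b, x) ∈ c.edgeSet) :
    Xor' (s(b, y) ∈ c.edgeSet) (s(b, z) ∈ c.edgeSet) := by
  classical
  obtain ⟨a0, w, hcyc, hlen, rfl⟩ := hc
  rw [Subgraph.mem_edgeSet] at hx
  have hb : b ∈ w.support := by
    rw [← mem_verts_toSubgraph]
    exact w.toSubgraph.edge_vert hx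
  have hts : (w.rotate _ hb).toSubgraph = w.toSubgraph := w.toSubgraph_rotate hb
  have hcyc' : (w.rotate _ hb).IsCycle := hcyc.rotate hb
  obtain ⟨n1, n2, hne, hadj⟩ :
      ∃ n1 n2, n1 ≠ n2 ∧ ∀ u, w.toSubgraph.Adj b u ↔ u = n1 ∨ u = n2 :=
    ⟨_, _, cycle_neighbors_ne hcyc', fun u => by rw [← hts]; exact cycle_adj_start hcyc' u⟩
  have hmem : ∀ u, w.toSubgraph.Adj b u → u = x ∨ u = y ∨ u = z := by
    intro u hu
    have hGu : u ∈ G.neighborSet b := w.toSubgraph.adj_sub hu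
    rw [hN] at hGu
    simpa using hGu
  simp only [Subgraph.mem_edgeSet]
  have hn1 : n1 = x ∨ n1 = y ∨ n1 = z := hmem n1 ((hadj n1).mpr (Or.inl rfl))
  have hn2 : n2 = x ∨ n2 = y ∨ n2 = z := hmem n2 ((hadj n2).mpr (Or.inr rfl))
  have hx12 : x = n1 ∨ x = n2 := (hadj x).mp hx
  rw [Xor', hadj y, hadj z]
  rcases hn1 with rfl | rfl | rfl <;> rcases hn2 with rfl | rfl | rfl <;> tauto

end Helpers

/-- In an egr(v,3,g,2t)-graph, every path subgraph on 3 vertices lies on exactly t shortest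
cycles. -/
theorem stmt_8 {V : Type*} (G : SimpleGraph V) (v g t : ℕ)
    (hG : IsEGR G v 3 g (2 * t))
    (p : G.Subgraph) (hp : IsPathSub G 3 p) :
    {c : G.Subgraph | IsCycleSub G g c ∧ p ≤ c}.ncard = t := by
  classical
  obtain ⟨hv, hdeg, hgirth, hedge⟩ := hG
  -- local finiteness
  have hfin : ∀ x : V, (G.neighborSet x).Finite := by
    intro x
    rw [← Set.not_infinite]
    intro h
    have h3 := hdeg x
    rw [h.ncard] at h3
    omega
  haveI : G.LocallyFinite := fun x => (hfin x).fintype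
  -- any set of g-cycle-subgraphs through a fixed vertex is finite
  have hSfin : ∀ (x : V) (S : Set G.Subgraph),
      (∀ c ∈ S, IsCycleSub G g c ∧ x ∈ c.verts) → S.Finite := by
    intro x S hS
    have : S ⊆ (fun w : G.Walk x x => w.toSubgraph) '' {w : G.Walk x x | w.length = g} := by
      intro c hc
      obtain ⟨⟨a0, w, hcyc, hlen, rfl⟩, hx⟩ := hS c hc
      have hxs : x ∈ w.support := (Walk.mem_verts_toSubgraph w).mp hx
      refine ⟨w.rotate _ hxs, ?_, w.toSubgraph_rotate hxs⟩
      have : (w.rotate _ hxs).edges.length = w.edges.length :=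
        (w.rotate_edges _ hxs).perm.length_eq
      rw [Walk.length_edges, Walk.length_edges] at this
      simp only [Set.mem_setOf_eq]
      rw [this, hlen]
    refine Set.Finite.subset (Set.Finite.image _ ?_) this
    rw [← SimpleGraph.coe_finsetWalkLength_eq]
    exact (G.finsetWalkLength g x x).finite_toSet
  -- destructure the path
  obtain ⟨a, c0, w, hpath, hlen, rfl⟩ := hp
  match w with
  | Walk.nil => simp at hlen
  | Walk.cons _ Walk.nil => simp at hlen
  | Walk.cons h1 (Walk.cons h2 (Walk.cons h3 w3)) => simp [Walk.length_cons] at hlen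
  | @Walk.cons _ _ _ b _ h1 (Walk.cons h2 Walk.nil) =>
  -- h1 : G.Adj a b, h2 : G.Adj b c0
  have hdist : a ≠ b ∧ a ≠ c0 ∧ b ≠ c0 := by
    have := hpath.support_nodup
    simp only [Walk.support_cons, Walk.support_nil, List.nodup_cons, List.mem_cons,
      List.mem_singleton, List.not_mem_nil, or_false, List.nodup_nil] at this
    tauto
  obtain ⟨hab, hac, hbc⟩ := hdist
  -- the third neighbor of b
  obtain ⟨d, hda, hdc, hNb⟩ := exists_third (hdeg b)
    (show a ∈ G.neighborSet b from h1.symm) (show c0 ∈ G.neighborSet b from h2)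
    hac
  have hdG : G.Adj b d := by
    have : d ∈ G.neighborSet b := by rw [hNb]; simp
    exact this
  -- membership of b in any cycle containing an edge at b
  have hbmem : ∀ (x : V) (c : G.Subgraph), s(b, x) ∈ c.edgeSet → b ∈ c.verts :=
    fun x c h => c.edge_vert (Subgraph.mem_edgeSet.mp h)
  have hTfin : ∀ x y : V,
      {c : G.Subgraph | IsCycleSub G g c ∧ s(b, x) ∈ c.edgeSet ∧ s(b, y) ∈ c.edgeSet}.Finite :=
    fun x y => hSfin b _ (fun c hc => ⟨hc.1, hbmem x c hc.2.1⟩)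
  -- the key counting identity
  have key : ∀ x y z : V, G.neighborSet b = {x, y, z} → x ≠ y → x ≠ z → y ≠ z →
      s(b, x) ∈ G.edgeSet →
      {c : G.Subgraph | IsCycleSub G g c ∧ s(b, x) ∈ c.edgeSet ∧ s(b, y) ∈ c.edgeSet}.ncard
        + {c : G.Subgraph | IsCycleSub G g c ∧ s(b, x) ∈ c.edgeSet ∧ s(b, z) ∈ c.edgeSet}.ncard
        = 2 * t := by
    intro x y z hN hxy hxz hyz hxE
    have hU : {c : G.Subgraph | IsCycleSub G g c ∧ s(b, x) ∈ c.edgeSet} =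
        {c : G.Subgraph | IsCycleSub G g c ∧ s(b, x) ∈ c.edgeSet ∧ s(b, y) ∈ c.edgeSet} ∪
        {c : G.Subgraph | IsCycleSub G g c ∧ s(b, x) ∈ c.edgeSet ∧ s(b, z) ∈ c.edgeSet} := by
      ext c
      simp only [Set.mem_setOf_eq, Set.mem_union]
      constructor
      · rintro ⟨hc, hx⟩
        rcases xor_other_edge hN hxy hxz hyz hc hx with ⟨hy, -⟩ | ⟨hz, -⟩
        · exact Or.inl ⟨hc, hx, hy⟩
        · exact Or.inr ⟨hc, hx, hz⟩
      · rintro (⟨hc, hx, -⟩ | ⟨hc, hx, -⟩) <;> exact ⟨hc, hx⟩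
    have hd : Disjoint
        {c : G.Subgraph | IsCycleSub G g c ∧ s(b, x) ∈ c.edgeSet ∧ s(b, y) ∈ c.edgeSet}
        {c : G.Subgraph | IsCycleSub G g c ∧ s(b, x) ∈ c.edgeSet ∧ s(b, z) ∈ c.edgeSet} := by
      rw [Set.disjoint_left]
      rintro c ⟨hc, hx, hy⟩ ⟨-, -, hz⟩
      rcases xor_other_edge hN hxy hxz hyz hc hx with ⟨-, h⟩ | ⟨-, h⟩
      · exact h hz
      · exact h hy
    rw [← hedge s(b, x) hxE, hU, Set.ncard_union_eq hd (hTfin x y) (hTfin x z)]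
  -- the three identities
  have h12 : {c : G.Subgraph | IsCycleSub G g c ∧ s(b, a) ∈ c.edgeSet ∧ s(b, c0) ∈ c.edgeSet}.ncard
      + {c : G.Subgraph | IsCycleSub G g c ∧ s(b, a) ∈ c.edgeSet ∧ s(b, d) ∈ c.edgeSet}.ncard
      = 2 * t :=
    key a c0 d hNb hac hda.symm hdc.symm (G.mem_edgeSet.mpr h1.symm)
  have hNb2 : G.neighborSet b = {c0, a, d} := by
    rw [hNb]; ext u; simp only [Set.mem_insert_iff, Set.mem_singleton_iff]; tauto
  have hNb3 : G.neighborSet b = {d, a, c0} := by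
    rw [hNb]; ext u; simp only [Set.mem_insert_iff, Set.mem_singleton_iff]; tauto
  have h21 : {c : G.Subgraph | IsCycleSub G g c ∧ s(b, c0) ∈ c.edgeSet ∧ s(b, a) ∈ c.edgeSet}.ncard
      + {c : G.Subgraph | IsCycleSub G g c ∧ s(b, c0) ∈ c.edgeSet ∧ s(b, d) ∈ c.edgeSet}.ncard
      = 2 * t :=
    key c0 a d hNb2 (Ne.symm hac) hdc.symm hda.symm (G.mem_edgeSet.mpr h2)
  have h31 : {c : G.Subgraph | IsCycleSub G g c ∧ s(b, d) ∈ c.edgeSet ∧ s(b, a) ∈ c.edgeSet}.ncard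
      + {c : G.Subgraph | IsCycleSub G g c ∧ s(b, d) ∈ c.edgeSet ∧ s(b, c0) ∈ c.edgeSet}.ncard
      = 2 * t :=
    key d a c0 hNb3 hda hdc hac (G.mem_edgeSet.mpr hdG)
  -- commutation of the pair conditions
  have hcomm : ∀ x y : V,
      {c : G.Subgraph | IsCycleSub G g c ∧ s(b, x) ∈ c.edgeSet ∧ s(b, y) ∈ c.edgeSet} =
      {c : G.Subgraph | IsCycleSub G g c ∧ s(b, y) ∈ c.edgeSet ∧ s(b, x) ∈ c.edgeSet} := by
    intro x y
    ext c
    simp only [Set.mem_setOf_eq]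
    tauto
  rw [hcomm c0 a] at h21
  rw [hcomm d a, hcomm d c0] at h31
  -- conclude the count of the middle pair
  have hcount : {c : G.Subgraph | IsCycleSub G g c ∧ s(b, a) ∈ c.edgeSet
      ∧ s(b, c0) ∈ c.edgeSet}.ncard = t := by
    omega
  -- identify the target set
  have htarget : {c : G.Subgraph | IsCycleSub G g c
        ∧ (Walk.cons h1 (Walk.cons h2 Walk.nil)).toSubgraph ≤ c} =
      {c : G.Subgraph | IsCycleSub G g c ∧ s(b, a) ∈ c.edgeSet ∧ s(b, c0) ∈ c.edgeSet} := by
    ext c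
    simp only [Set.mem_setOf_eq]
    refine and_congr_right fun _ => ?_
    constructor
    · intro h
      refine ⟨Subgraph.mem_edgeSet.mpr (h.2 ?_).symm, Subgraph.mem_edgeSet.mpr (h.2 ?_)⟩
      · show (Walk.cons h1 (Walk.cons h2 Walk.nil)).toSubgraph.Adj a b
        simp
      · show (Walk.cons h1 (Walk.cons h2 Walk.nil)).toSubgraph.Adj b c0
        simp
    · rintro ⟨hxe, hye⟩
      have hcab : c.Adj a b := (Subgraph.mem_edgeSet.mp hxe).symm
      have hcbc : c.Adj b c0 := Subgraph.mem_edgeSet.mp hye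
      simp only [Walk.toSubgraph]
      refine sup_le (SimpleGraph.subgraphOfAdj_le_of_adj c hcab) (sup_le (SimpleGraph.subgraphOfAdj_le_of_adj c hcbc) ?_)
      exact (G.singletonSubgraph_le_iff c0 c).mpr (c.edge_vert hcbc.symm)
  rw [htarget]
  exact hcount
end

section
/- If λ > 2^{⌈(g−5)/2⌉}, then G is 3-edge-connected. -/
open SimpleGraph

namespace EGRAux


variable {V : Type*} {G : SimpleGraph V}

open SimpleGraph Walk

lemma sym2_out (e : Sym2 V) : ∃ a b : V, e = s(a, b) :=
  Sym2.ind (fun a b => ⟨a, b, rfl⟩) e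

lemma mem_support_of_mem_edges' {u v x : V} (p : G.Walk u v) {d : Sym2 V}
    (hd : d ∈ p.edges) (hx : x ∈ d) : x ∈ p.support := by
  obtain ⟨a, b, rfl⟩ := sym2_out d
  rcases Sym2.mem_iff.1 hx with rfl | rfl
  · exact p.fst_mem_support_of_mem_edges hd
  · exact p.snd_mem_support_of_mem_edges hd

/-- In a path starting at `u`, any edge containing `u` is the first edge. -/
lemma edge_eq_first {u v : V} {p : G.Walk u v} (hp : p.IsPath) {d : Sym2 V}
    (hd : d ∈ p.edges) (hu : u ∈ d) :
    ∃ (b : V) (h : G.Adj u b) (q : G.Walk b v), p = Walk.cons h q ∧ d = s(u, b)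
      ∧ u ∉ q.support := by
  cases p with
  | nil => simp at hd
  | cons h q =>
    rw [Walk.cons_isPath_iff] at hp
    rcases (by simpa using hd) with rfl | hd2
    · exact ⟨_, h, q, rfl, rfl, hp.2⟩
    · exact absurd (mem_support_of_mem_edges' q hd2 hu) hp.2

lemma edge_at_start_unique {u v : V} {p : G.Walk u v} (hp : p.IsPath) {d d' : Sym2 V}
    (hd : d ∈ p.edges) (hu : u ∈ d) (hd' : d' ∈ p.edges) (hu' : u ∈ d') : d = d' := by
  obtain ⟨b, h, q, rfl, rfl, hns⟩ := edge_eq_first hp hd hu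
  rcases (by simpa using hd') with h' | h'
  · exact h'.symm
  · exact absurd (mem_support_of_mem_edges' q h' hu') hns

lemma edge_at_end_unique {u v : V} {p : G.Walk u v} (hp : p.IsPath) {d d' : Sym2 V}
    (hd : d ∈ p.edges) (hv : v ∈ d) (hd' : d' ∈ p.edges) (hv' : v ∈ d') : d = d' := by
  have hd1 : d ∈ p.reverse.edges := by rw [Walk.edges_reverse]; simpa using hd
  have hd2 : d' ∈ p.reverse.edges := by rw [Walk.edges_reverse]; simpa using hd'
  exact edge_at_start_unique hp.reverse hd1 hv hd2 hv'

lemma loop_path_nil {u : V} {p : G.Walk u u} (hp : p.IsPath) : p = Walk.nil := by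
  cases p with
  | nil => rfl
  | cons h q =>
    rw [Walk.cons_isPath_iff] at hp
    exact absurd q.end_mem_support hp.2

lemma exists_first_edge {a b : V} (p : G.Walk a b) (h : p.edges ≠ []) :
    ∃ (c : V) (hc : G.Adj a c), s(a, c) ∈ p.edges := by
  cases p with
  | nil => simp at h
  | cons had q =>
    rename_i c
    exact ⟨c, had, by simp⟩

lemma exists_edge_at_end {b u : V} (p : G.Walk b u) (h : p.edges ≠ []) :
    ∃ d, d ∈ p.edges ∧ u ∈ d := by
  obtain ⟨c, hc, hm⟩ := exists_first_edge p.reverse (by rw [Walk.edges_reverse]; simpa using h)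
  rw [Walk.edges_reverse] at hm
  exact ⟨s(u, c), by simpa using hm, by simp⟩

/-- A cycle walk based at `u` has exactly two (distinct) edges incident to `u`. -/
lemma cycle_edges_at_start {u : V} (W : G.Walk u u) (hc : W.IsCycle) :
    ∃ d1 d2 : Sym2 V, d1 ≠ d2 ∧ d1 ∈ W.edges ∧ d2 ∈ W.edges ∧ u ∈ d1 ∧ u ∈ d2 ∧
      ∀ d ∈ W.edges, u ∈ d → d = d1 ∨ d = d2 := by
  cases W with
  | nil => exact absurd rfl hc.ne_nil
  | cons h p =>
    rename_i c
    obtain ⟨hp, hnotin⟩ := (Walk.cons_isCycle_iff p h).mp hc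
    have hpn : p.edges ≠ [] := by
      intro hnil
      have h3 := hc.three_le_length
      have hl : p.length = 0 := by
        have := congrArg List.length hnil
        simpa [Walk.length_edges] using this
      simp [Walk.length_cons, hl] at h3
    obtain ⟨d2, hd2, hud2⟩ := exists_edge_at_end p hpn
    refine ⟨s(u, c), d2, ?_, by simp, by simp [hd2], by simp, hud2, ?_⟩
    · rintro rfl; exact hnotin hd2
    · intro d hd hud
      rcases (by simpa using hd) with rfl | hd3
      · exact Or.inl rfl
      · exact Or.inr (edge_at_end_unique hp hd3 hud hd2 hud2)

/-- A vertex of a cycle cannot be incident to three distinct edges of the cycle. -/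
lemma not_three_edges {x u : V} {W : G.Walk x x} (hW : W.IsCycle)
    {d1 d2 d3 : Sym2 V} (h1 : d1 ∈ W.edges) (h2 : d2 ∈ W.edges) (h3 : d3 ∈ W.edges)
    (hu1 : u ∈ d1) (hu2 : u ∈ d2) (hu3 : u ∈ d3)
    (h12 : d1 ≠ d2) (h13 : d1 ≠ d3) (h23 : d2 ≠ d3) : False := by
  classical
  have hu : u ∈ W.support := mem_support_of_mem_edges' W h1 hu1
  have hmem : ∀ d, d ∈ (W.rotate u hu).edges ↔ d ∈ W.edges := fun d =>
    (W.rotate_edges u hu).perm.mem_iff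
  obtain ⟨a1, a2, hne, _, _, _, _, huniq⟩ := cycle_edges_at_start (W.rotate u hu) (hW.rotate hu)
  rcases huniq d1 ((hmem d1).2 h1) hu1 with rfl | rfl <;>
    rcases huniq d2 ((hmem d2).2 h2) hu2 with rfl | rfl <;>
      rcases huniq d3 ((hmem d3).2 h3) hu3 with rfl | rfl <;> simp_all





lemma isPath_concat {a b c : V} {p : G.Walk a b} (hp : p.IsPath) (h : G.Adj b c)
    (hc : c ∉ p.support) : (p.concat h).IsPath := by
  rw [Walk.concat_eq_append]
  rw [Walk.isPath_def] at hp ⊢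
  rw [Walk.support_append]
  simp only [Walk.support_cons, Walk.support_nil, List.tail_cons]
  rw [List.nodup_append]
  refine ⟨hp, List.nodup_singleton c, ?_⟩
  intro x hx
  simp only [List.mem_singleton]
  rintro _ rfl rfl
  exact hc hx

lemma edges_concat' {a b c : V} (p : G.Walk a b) (h : G.Adj b c) :
    (p.concat h).edges = p.edges ++ [s(b, c)] := by
  rw [Walk.concat_eq_append, Walk.edges_append]
  simp

/-- Orient a cycle walk along a chosen edge `s(u,y)`. -/
lemma orient {x : V} {W : G.Walk x x} (hW : W.IsCycle) {u y : V} (he : s(u, y) ∈ W.edges) :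
    ∃ p : G.Walk y u, p.IsPath ∧ s(u, y) ∉ p.edges ∧ p.length + 1 = W.length ∧
      (∀ d ∈ p.edges, d ∈ W.edges) ∧ (∀ d ∈ W.edges, d ≠ s(u, y) → d ∈ p.edges) := by
  classical
  have hu : u ∈ W.support := W.fst_mem_support_of_mem_edges he
  have hmem : ∀ d, d ∈ (W.rotate u hu).edges ↔ d ∈ W.edges := fun d =>
    (W.rotate_edges u hu).perm.mem_iff
  have hlen : (W.rotate u hu).length = W.length := by
    have := (W.rotate_edges u hu).perm.length_eq
    rwa [Walk.length_edges, Walk.length_edges] at this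
  have hc : (W.rotate u hu).IsCycle := hW.rotate hu
  revert hc hlen hmem
  generalize (W.rotate u hu) = W'
  intro hmem hlen hc
  cases W' with
  | nil => exact absurd rfl hc.ne_nil
  | cons h0 p0 =>
    rename_i b
    obtain ⟨hp0, hnotin⟩ := (Walk.cons_isCycle_iff p0 h0).mp hc
    have heW' : s(u, y) ∈ (Walk.cons h0 p0).edges := (hmem _).mpr he
    have hub : u ≠ b := h0.ne
    rcases (by simpa using heW') with heq | hin
    · -- s(u,y) is the first edge, so y = b
      have hyb : y = b := by
        rcases heq with h2 | ⟨h1, _⟩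
        · exact h2
        · exact absurd h1 hub
      subst hyb
      refine ⟨p0, hp0, hnotin, ?_, ?_, ?_⟩
      · rw [← hlen]; simp [Walk.length_cons]
      · intro d hd; exact (hmem d).mp (by simp [hd])
      · intro d hd hne
        rcases (by simpa using (hmem d).mpr hd) with rfl | h
        · exact absurd rfl hne
        · exact h
    · -- s(u,y) lies in p0, hence is its last edge
      have hurev : s(u, y) ∈ p0.reverse.edges := by rw [Walk.edges_reverse]; simpa using hin
      obtain ⟨c, hadj, q', hq'eq, heq, hnsup⟩ :=
        edge_eq_first hp0.reverse hurev (by simp)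
      have hyc : y = c := by
        rcases Sym2.eq_iff.mp heq with ⟨_, h2⟩ | ⟨h1, _⟩
        · exact h2
        · exact absurd h1 hadj.ne
      subst hyc
      -- p := q'.concat (h0.symm)  : y → b → u
      have hyneb : s(u, y) ≠ s(b, u) := by
        intro hcon
        rcases Sym2.eq_iff.mp hcon with ⟨h1, _⟩ | ⟨_, h2⟩
        · exact hub h1
        · -- y = b : then s(u,y) is the first edge, contradiction with hin
          subst h2
          exact hnotin hin
      have hq'path : q'.IsPath := by
        have := hp0.reverse
        rw [hq'eq, Walk.cons_isPath_iff] at this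
        exact this.1
      have hedgesp0 : ∀ d, d ∈ p0.edges ↔ d = s(u, y) ∨ d ∈ q'.edges := by
        intro d
        have : p0.edges = p0.reverse.edges.reverse := by simp [Walk.edges_reverse]
        rw [this, hq'eq]
        simp [or_comm]
      refine ⟨q'.concat h0.symm, ?_, ?_, ?_, ?_, ?_⟩
      · refine isPath_concat hq'path h0.symm ?_
        -- u ∉ q'.support
        exact hnsup
      · rw [edges_concat']
        intro hcon
        rcases List.mem_append.mp hcon with h | h
        · have : u ∈ q'.support := mem_support_of_mem_edges' q' h (by simp)
          exact hnsup this
        · exact hyneb (by simpa using h)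
      · rw [← hlen]
        have l1 : (q'.concat h0.symm).length = q'.length + 1 := by
          rw [Walk.concat_eq_append, Walk.length_append]; simp
        have l2 : p0.length = q'.length + 1 := by
          have := congrArg Walk.length hq'eq
          rw [Walk.length_reverse, Walk.length_cons] at this
          omega
        rw [l1, Walk.length_cons, l2]
      · intro d hd
        rw [edges_concat'] at hd
        rcases List.mem_append.mp hd with h | h
        · exact (hmem d).mp (by simp [(hedgesp0 d).mpr (Or.inr h), Walk.edges_cons])
        · have : d = s(u, b) := by simpa [Sym2.eq_swap] using h
          exact (hmem d).mp (by simp [this])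
      · intro d hd hne
        rw [edges_concat']
        rcases (by simpa using (hmem d).mpr hd) with rfl | h
        · exact List.mem_append.mpr (Or.inr (by simp [Sym2.eq_swap]))
        · rcases (hedgesp0 d).mp h with rfl | h2
          · exact absurd rfl hne
          · exact List.mem_append.mpr (Or.inl h2)

/-- Split a walk at an edge. -/
lemma split_at_edge {a b : V} (p : G.Walk a b) {e : Sym2 V} (he : e ∈ p.edges) :
    ∃ (α β : V) (q : G.Walk a α) (r : G.Walk β b) (h : G.Adj α β),
      e = s(α, β) ∧ p = q.append (Walk.cons h r) := by
  induction p with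
  | nil => simp at he
  | cons h p ih =>
    rcases (by simpa using he) with rfl | he2
    · exact ⟨_, _, Walk.nil, p, h, rfl, rfl⟩
    · obtain ⟨α, β, q, r, h', rfl, rfl⟩ := ih he2
      exact ⟨α, β, Walk.cons h q, r, h', rfl, by rw [Walk.cons_append]⟩


lemma eq_nil_of_loop_path {u : V} {p : G.Walk u u} (hp : p.IsPath) : p = Walk.nil :=
  loop_path_nil hp


lemma eq_of_length_one {u v : V} : ∀ (p : G.Walk u v), p.length = 1 →
    ∀ (q : G.Walk u v), q.length = 1 → p = q := by
  intro p hp q hq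
  cases p with
  | nil => simp at hp
  | cons h p' =>
    cases p' with
    | nil =>
      cases q with
      | nil => simp at hq
      | cons h2 q' =>
        cases q' with
        | nil => rfl
        | cons _ _ => simp [Walk.length_cons] at hq
    | cons _ _ => simp [Walk.length_cons] at hp

/-- Two distinct paths with the same endpoints yield a cycle of length at most the
sum of their lengths. -/
lemma exists_cycle_of_two_paths :
    ∀ (n : ℕ) {u v : V} (p q : G.Walk u v), p.IsPath → q.IsPath → p ≠ q →
      p.length + q.length ≤ n →
      ∃ (x : V) (c : G.Walk x x), c.IsCycle ∧ c.length ≤ p.length + q.length := by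
  classical
  intro n
  induction n using Nat.strong_induction_on with
  | _ n ih =>
  intro u v p q hp hq hne hlen
  by_cases huv : u = v
  · subst huv
    rw [loop_path_nil hp, loop_path_nil hq] at hne
    exact absurd rfl hne
  by_cases hx : ∃ x, x ∈ p.support ∧ x ∈ q.support ∧ x ≠ u ∧ x ≠ v
  · obtain ⟨x, hxp, hxq, hxu, hxv⟩ := hx
    set p1 := p.takeUntil x hxp with hp1
    set p2 := p.dropUntil x hxp with hp2
    set q1 := q.takeUntil x hxq with hq1
    set q2 := q.dropUntil x hxq with hq2
    have hpspec : p1.append p2 = p := Walk.take_spec p hxp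
    have hqspec : q1.append q2 = q := Walk.take_spec q hxq
    have hp1p : p1.IsPath := hp.takeUntil hxp
    have hp2p : p2.IsPath := hp.dropUntil hxp
    have hq1p : q1.IsPath := hq.takeUntil hxq
    have hq2p : q2.IsPath := hq.dropUntil hxq
    have hlp : p1.length + p2.length = p.length := by
      rw [← Walk.length_append, hpspec]
    have hlq : q1.length + q2.length = q.length := by
      rw [← Walk.length_append, hqspec]
    have hp2pos : 1 ≤ p2.length := by
      rcases Nat.eq_zero_or_pos p2.length with h | h
      · exact absurd (Walk.eq_of_length_eq_zero h) hxv
      · exact h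
    have hq2pos : 1 ≤ q2.length := by
      rcases Nat.eq_zero_or_pos q2.length with h | h
      · exact absurd (Walk.eq_of_length_eq_zero h) hxv
      · exact h
    have hp1pos : 1 ≤ p1.length := by
      rcases Nat.eq_zero_or_pos p1.length with h | h
      · exact absurd (Walk.eq_of_length_eq_zero h).symm hxu
      · exact h
    have hq1pos : 1 ≤ q1.length := by
      rcases Nat.eq_zero_or_pos q1.length with h | h
      · exact absurd (Walk.eq_of_length_eq_zero h).symm hxu
      · exact h
    have hcases : p1 ≠ q1 ∨ p2 ≠ q2 := by
      by_contra hcon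
      push_neg at hcon
      rw [← hpspec, ← hqspec, hcon.1, hcon.2] at hne
      exact hne rfl
    rcases hcases with hne1 | hne2
    · obtain ⟨z, c, hcyc, hclen⟩ := ih (p1.length + q1.length)
        (by omega) p1 q1 hp1p hq1p hne1 le_rfl
      exact ⟨z, c, hcyc, by omega⟩
    · obtain ⟨z, c, hcyc, hclen⟩ := ih (p2.length + q2.length)
        (by omega) p2 q2 hp2p hq2p hne2 le_rfl
      exact ⟨z, c, hcyc, by omega⟩
  · -- supports meet only in {u, v}; glue into a cycle
    push_neg at hx
    have hsup : ∀ z, z ∈ p.support → z ∈ q.support → z = u ∨ z = v := by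
      intro z h1 h2
      by_contra hcon
      push_neg at hcon
      exact hcon.2 (hx z h1 h2 hcon.1)
    -- no common edge
    have hnoedge : ∀ d, d ∈ p.edges → d ∈ q.edges → False := by
      intro d hdp hdq
      obtain ⟨a, b, rfl⟩ := sym2_out d
      have hadj : G.Adj a b := p.edges_subset_edgeSet hdp
      have ha : a = u ∨ a = v := hsup a
        (mem_support_of_mem_edges' p hdp (by simp)) (mem_support_of_mem_edges' q hdq (by simp))
      have hb : b = u ∨ b = v := hsup b
        (mem_support_of_mem_edges' p hdp (by simp)) (mem_support_of_mem_edges' q hdq (by simp))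
      have hd : s(a, b) = s(u, v) := by
        rcases ha with rfl | rfl <;> rcases hb with rfl | rfl
        · exact absurd rfl hadj.ne
        · rfl
        · exact Sym2.eq_swap
        · exact absurd rfl hadj.ne
      -- then p and q are both the single edge walk
      have hsingle : ∀ (r : G.Walk u v), r.IsPath → s(u, v) ∈ r.edges →
          r.length = 1 := by
        intro r hr hmem
        obtain ⟨b', h', q', rfl, heq, hnot⟩ := edge_eq_first hr hmem (by simp)
        have hb' : b' = v := by
          rcases Sym2.eq_iff.mp heq with ⟨_, h2⟩ | ⟨h1, _⟩
          · exact h2.symm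
          · exact absurd h1 h'.ne
        subst hb'
        have : q' = Walk.nil := loop_path_nil ((Walk.cons_isPath_iff _ _).mp hr).1
        subst this
        simp
      have hp1 : p.length = 1 := hsingle p hp (hd ▸ hdp)
      have hq1 : q.length = 1 := hsingle q hq (hd ▸ hdq)
      exact hne (eq_of_length_one p hp1 q hq1)
    refine ⟨u, p.append q.reverse, ?_, by simp [Walk.length_append, Walk.length_reverse]⟩
    have hppos : 1 ≤ p.length := by
      rcases Nat.eq_zero_or_pos p.length with h | h
      · exact absurd (Walk.eq_of_length_eq_zero h) huv
      · exact h
    constructor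
    · constructor
      · -- IsTrail : edges nodup
        rw [Walk.isTrail_def, Walk.edges_append, Walk.edges_reverse]
        apply List.Nodup.append hp.isTrail.edges_nodup
          (by rw [List.nodup_reverse]; exact hq.isTrail.edges_nodup)
        intro d hdp hdq
        exact hnoedge d hdp (by simpa using hdq)
      · -- nonempty
        intro hnil
        have := congrArg Walk.length hnil
        rw [Walk.length_append] at this
        simp at this
        exact huv this.1.eq
    · -- support.tail nodup
      rw [Walk.tail_support_append]
      apply List.Nodup.append (hp.support_nodup.tail)
      · have : q.reverse.IsPath := hq.reverse
        exact this.support_nodup.tail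
      · intro z hzp hzq
        have hzp' : z ∈ p.support := List.mem_of_mem_tail hzp
        have hzq' : z ∈ q.support := by
          have : z ∈ q.reverse.support := List.mem_of_mem_tail hzq
          rwa [Walk.support_reverse, List.mem_reverse] at this
        rcases hsup z hzp' hzq' with rfl | rfl
        · have hnd := hp.support_nodup
          rw [p.support_eq_cons] at hnd
          exact (List.nodup_cons.mp hnd).1 hzp
        · have hnd := hq.reverse.support_nodup
          rw [q.reverse.support_eq_cons] at hnd
          exact (List.nodup_cons.mp hnd).1 hzq


lemma girth_le_of_cycle {x : V} {w : G.Walk x x} (hw : w.IsCycle) {g : ℕ}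
    (hg : G.girth = g) : g ≤ w.length := by
  have h1 : G.egirth ≤ (w.length : ℕ∞) := by
    rw [SimpleGraph.egirth]
    exact iInf_le_of_le x (iInf_le_of_le w (iInf_le_of_le hw le_rfl))
  have h2 := ENat.toNat_le_toNat h1 (by simp)
  rwa [← SimpleGraph.girth, hg, ENat.toNat_coe] at h2

lemma girth_le_two_paths {g : ℕ} (hg : G.girth = g) {u v : V} {p q : G.Walk u v}
    (hp : p.IsPath) (hq : q.IsPath) (hne : p ≠ q) : g ≤ p.length + q.length := by
  obtain ⟨x, c, hc, hlen⟩ :=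
    exists_cycle_of_two_paths (p.length + q.length) p q hp hq hne le_rfl
  exact le_trans (girth_le_of_cycle hc hg) hlen

/-- The two sides of a cycle through the edges `s(u,yb)` and `s(α,β)`. -/
structure Decomp (G : SimpleGraph V) (g : ℕ) (c : G.Subgraph) (u yb α β : V) where
  S : G.Walk u β
  R : G.Walk yb α
  hS : S.IsPath
  hR : R.IsPath
  hadj : G.Adj α β
  hlen : S.length + R.length + 2 = g
  heS : s(α, β) ∉ S.edges
  heR : s(α, β) ∉ R.edges
  hαS : α ∉ S.support
  hβR : β ∉ R.support
  hyS : yb ∉ S.support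
  huR : u ∉ R.support
  hedgeS : ∀ d ∈ S.edges, d ∈ c.edgeSet
  hedgeR : ∀ d ∈ R.edges, d ∈ c.edgeSet

def Decomp.swap {g : ℕ} {c : G.Subgraph} {u yb α β : V} (D : Decomp G g c u yb α β) :
    Decomp G g c yb u β α where
  S := D.R
  R := D.S
  hS := D.hR
  hR := D.hS
  hadj := D.hadj.symm
  hlen := by have := D.hlen; omega
  heS := by rw [Sym2.eq_swap]; exact D.heR
  heR := by rw [Sym2.eq_swap]; exact D.heS
  hαS := D.hβR
  hβR := D.hαS
  hyS := D.huR
  huR := D.hyS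
  hedgeS := D.hedgeR
  hedgeR := D.hedgeS

lemma build_decomp {g : ℕ} {c : G.Subgraph} (hc : IsCycleSub G g c) {u yb : V}
    (he1 : s(u, yb) ∈ c.edgeSet) {e2 : Sym2 V} (he2 : e2 ∈ c.edgeSet)
    (hne : s(u, yb) ≠ e2) :
    ∃ (α β : V), e2 = s(α, β) ∧ Nonempty (Decomp G g c u yb α β) := by
  obtain ⟨x, W, hW, hWlen, rfl⟩ := hc
  rw [Walk.edgeSet_toSubgraph] at he1 he2
  obtain ⟨p, hp, he1p, hplen, hsub, hsup⟩ := orient hW he1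
  have he2p : e2 ∈ p.edges := hsup e2 he2 (Ne.symm hne)
  obtain ⟨α, β, q, r, hαβ, rfl, hpeq⟩ := split_at_edge p he2p
  have hsupp : p.support = q.support ++ r.support := by
    rw [hpeq, Walk.support_append, Walk.support_cons]
    simp
  have hnd : (q.support ++ r.support).Nodup := by
    rw [← hsupp]; exact hp.support_nodup
  have hdisj : ∀ z, z ∈ q.support → z ∈ r.support → False := by
    intro z h1 h2
    exact (List.disjoint_of_nodup_append hnd) h1 h2
  have hedges : p.edges = q.edges ++ s(α, β) :: r.edges := by
    rw [hpeq, Walk.edges_append, Walk.edges_cons]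
  have hndE : (q.edges ++ s(α, β) :: r.edges).Nodup := by
    rw [← hedges]; exact hp.isTrail.edges_nodup
  have hqpath : q.IsPath := by
    rw [hpeq] at hp; exact hp.of_append_left
  have hconsr : (Walk.cons hαβ r).IsPath := by
    rw [hpeq] at hp; exact hp.of_append_right
  obtain ⟨hrpath, hαr⟩ := (Walk.cons_isPath_iff _ _).mp hconsr
  refine ⟨α, β, rfl, ⟨⟨r.reverse, q, hrpath.reverse, hqpath, hαβ, ?_, ?_, ?_, ?_, ?_, ?_, ?_,
    ?_, ?_⟩⟩⟩
  · -- lengths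
    have : p.length = q.length + (1 + r.length) := by
      rw [hpeq, Walk.length_append, Walk.length_cons]; omega
    rw [Walk.length_reverse]
    omega
  · -- e2 ∉ S.edges
    rw [Walk.edges_reverse]
    intro hmem
    have h1 : s(α, β) ∈ r.edges := by simpa using hmem
    have := List.Nodup.of_append_right hndE
    rw [List.nodup_cons] at this
    exact this.1 h1
  · -- e2 ∉ R.edges
    intro hmem
    exact (List.disjoint_of_nodup_append hndE) hmem (by simp)
  · -- α ∉ S.support
    rw [Walk.support_reverse]
    intro hmem
    exact hαr (by simpa using hmem)
  · -- β ∉ R.support = q.support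
    intro hmem
    exact hdisj β hmem r.start_mem_support
  · -- yb ∉ S.support
    rw [Walk.support_reverse]
    intro hmem
    exact hdisj yb q.start_mem_support (by simpa using hmem)
  · -- u ∉ R.support
    intro hmem
    exact hdisj u hmem r.end_mem_support
  · -- edges of S in c
    intro d hd
    rw [Walk.edges_reverse] at hd
    rw [Walk.edgeSet_toSubgraph]
    exact hsub d (by rw [hedges]; exact List.mem_append.mpr (Or.inr (by simp [List.mem_reverse.mp hd])))
  · -- edges of R in c
    intro d hd
    rw [Walk.edgeSet_toSubgraph]
    exact hsub d (by rw [hedges]; exact List.mem_append.mpr (Or.inl hd))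

/-- key comparison: all cycles through both edges contain the short side of a fixed one. -/
lemma decomp_eq {g : ℕ} (hgirth : G.girth = g) {c c0 : G.Subgraph} {e2 : Sym2 V}
    {u yb α0 β0 α β : V}
    (D0 : Decomp G g c0 u yb α0 β0) (D : Decomp G g c u yb α β)
    (he20 : e2 = s(α0, β0)) (he2 : e2 = s(α, β))
    (hshort : 2 * D0.S.length + 2 ≤ g) :
    ∀ d ∈ D0.S.edges, d ∈ c.edgeSet := by
  have tw : ∀ {a b : V} (p q : G.Walk a b), p.IsPath → q.IsPath → p ≠ q →
      g ≤ p.length + q.length := fun p q h1 h2 h3 => girth_le_two_paths hgirth h1 h2 h3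
  by_cases hβ : β = β0
  · have hα : α = α0 := by
      rw [he20] at he2
      rcases Sym2.eq_iff.mp he2 with ⟨h1, h2⟩ | ⟨h1, h2⟩
      · exact h1.symm
      · exact absurd (h2.symm.trans hβ.symm) D.hadj.ne
    subst hβ
    subst hα
    by_cases hSS : D.S = D0.S
    · intro d hd
      exact D.hedgeS d (by rw [hSS]; exact hd)
    · exfalso
      have g1 : g ≤ D.S.length + D0.S.length := tw _ _ D.hS D0.hS hSS
      by_cases hRR : D.R = D0.R
      · have : D.R.length = D0.R.length := by rw [hRR]
        have h1 := D.hlen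
        have h2 := D0.hlen
        omega
      · have g2 : g ≤ D.R.length + D0.R.length := tw _ _ D.hR D0.hR hRR
        have h1 := D.hlen
        have h2 := D0.hlen
        omega
  · exfalso
    rw [he20] at he2
    rcases Sym2.eq_iff.mp he2 with ⟨h1, h2⟩ | ⟨h1, h2⟩
    · exact hβ h2.symm
    · subst h1
      subst h2
      -- now D0 : Decomp G g c0 u yb β α ; extend both sides by the edge s(α,β)
      have hS'path : (D.S.concat D.hadj.symm).IsPath :=
        isPath_concat D.hS D.hadj.symm D.hαS
      have hSne : D.S.concat D.hadj.symm ≠ D0.S := by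
        intro hcon
        apply D0.heS
        rw [← hcon, edges_concat']
        exact List.mem_append.mpr (Or.inr (by simp))
      have g1 : g ≤ (D.S.concat D.hadj.symm).length + D0.S.length :=
        tw _ _ hS'path D0.hS hSne
      have hR'path : (D.R.concat D.hadj).IsPath :=
        isPath_concat D.hR D.hadj D.hβR
      have hRne : D.R.concat D.hadj ≠ D0.R := by
        intro hcon
        apply D0.heR
        rw [Sym2.eq_swap, ← hcon, edges_concat']
        exact List.mem_append.mpr (Or.inr (by simp))
      have g2 : g ≤ (D.R.concat D.hadj).length + D0.R.length :=
        tw _ _ hR'path D0.hR hRne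
      have l1 : (D.S.concat D.hadj.symm).length = D.S.length + 1 := by
        rw [Walk.concat_eq_append, Walk.length_append]; simp
      have l2 : (D.R.concat D.hadj).length = D.R.length + 1 := by
        rw [Walk.concat_eq_append, Walk.length_append]; simp
      have h1 := D.hlen
      have h2 := D0.hlen
      omega


lemma big_aux {g lam : ℕ} (hdeg : ∀ x : V, (G.neighborSet x).ncard = 3) (hgirth : G.girth = g)
    (hcnt : ∀ e ∈ G.edgeSet, {c : G.Subgraph | IsCycleSub G g c ∧ e ∈ c.edgeSet}.ncard = lam)
    (hlam : 1 ≤ lam) {e1 e2 : Sym2 V} (he1 : e1 ∈ G.edgeSet) (hne : e1 ≠ e2)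
    (hc1 : ∀ c : G.Subgraph, IsCycleSub G g c → e1 ∈ c.edgeSet → e2 ∈ c.edgeSet)
    {u yb α0 β0 : V} (he1uv : e1 = s(u, yb)) {c0 : G.Subgraph}
    (D0 : Decomp G g c0 u yb α0 β0) (he2ab : e2 = s(α0, β0))
    (hshort : 2 * D0.S.length + 2 ≤ g) : False := by
  classical
  have hfin : ∀ e ∈ G.edgeSet, {c : G.Subgraph | IsCycleSub G g c ∧ e ∈ c.edgeSet}.Finite := by
    intro e he
    by_contra h
    have h0 := hcnt e he
    rw [Set.Infinite.ncard h] at h0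
    omega
  have hstar : ∀ c : G.Subgraph, IsCycleSub G g c → e1 ∈ c.edgeSet →
      ∀ d ∈ D0.S.edges, d ∈ c.edgeSet := by
    intro c hcc hce1
    have hce2 := hc1 c hcc hce1
    obtain ⟨α, β, he2ab', ⟨D⟩⟩ := build_decomp hcc (he1uv ▸ hce1) hce2
      (by rw [← he1uv]; exact hne)
    exact decomp_eq hgirth D0 D he2ab he2ab' hshort
  have hyadj : G.Adj u yb := (G.mem_edgeSet).mp (he1uv ▸ he1)
  have huyb : u ≠ yb := hyadj.ne
  -- find z with f = s(u,z) contained in every cycle through e1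
  obtain ⟨z, hadjz, hzyb, hfc⟩ : ∃ z : V, G.Adj u z ∧ z ≠ yb ∧
      ∀ c : G.Subgraph, IsCycleSub G g c → e1 ∈ c.edgeSet → s(u, z) ∈ c.edgeSet := by
    rcases Nat.eq_zero_or_pos D0.S.length with hs0 | hs0
    · -- u = β0, f = e2
      have hub : u = β0 := Walk.eq_of_length_eq_zero hs0
      have hfe2 : s(u, α0) = e2 := by rw [he2ab, hub]; exact Sym2.eq_swap
      refine ⟨α0, ?_, ?_, ?_⟩
      · exact (hub ▸ D0.hadj).symm
      · intro hcon
        apply hne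
        rw [he1uv, ← hfe2, hcon]
      · intro c hcc hce1
        rw [hfe2]
        exact hc1 c hcc hce1
    · -- f is the first edge of D0.S
      have hSne : D0.S.edges ≠ [] := by
        intro hnil
        have := congrArg List.length hnil
        rw [Walk.length_edges, List.length_nil] at this
        omega
      obtain ⟨z, hz, hmemS⟩ := exists_first_edge D0.S hSne
      refine ⟨z, hz, ?_, fun c hcc hce1 => hstar c hcc hce1 _ hmemS⟩
      intro hcon
      apply D0.hyS
      subst hcon
      exact mem_support_of_mem_edges' D0.S hmemS (by simp)
  have hfne1 : s(u, z) ≠ e1 := by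
    rw [he1uv]
    intro hcon
    rcases Sym2.eq_iff.mp hcon with ⟨_, h2⟩ | ⟨h1, _⟩
    · exact hzyb h2
    · exact huyb h1
  -- third neighbour w of u
  have hNfin : (G.neighborSet u).Finite := by
    by_contra hI
    have := Set.Infinite.ncard hI
    rw [hdeg u] at this
    omega
  obtain ⟨w, hwN, hwne⟩ : ∃ w, w ∈ G.neighborSet u ∧ w ∉ ({yb, z} : Set V) := by
    apply Set.not_subset.mp
    intro hsubs
    have h1 := Set.ncard_le_ncard hsubs (Set.toFinite _)
    have h2 : ({yb, z} : Set V).ncard ≤ 2 := by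
      apply le_trans (Set.ncard_insert_le _ _)
      simp
    rw [hdeg u] at h1
    omega
  have hwyb : w ≠ yb := fun hcon => hwne (by simp [hcon])
  have hwz : w ≠ z := fun hcon => hwne (by simp [hcon])
  have hadjw : G.Adj u w := hwN
  have hNeq : G.neighborSet u = {yb, z, w} := by
    symm
    apply Set.eq_of_subset_of_ncard_le
    · intro t ht
      rcases ht with rfl | rfl | rfl
      · exact hyadj
      · exact hadjz
      · exact hadjw
    · rw [hdeg u]
      have hnm : yb ∉ ({z, w} : Set V) := by
        simp only [Set.mem_insert_iff, Set.mem_singleton_iff]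
        push_neg
        exact ⟨Ne.symm hzyb, Ne.symm hwyb⟩
      rw [Set.ncard_insert_of_notMem hnm, Set.ncard_pair (Ne.symm hwz)]
    · exact hNfin
  have hhne1 : s(u, w) ≠ e1 := by
    rw [he1uv]
    intro hcon
    rcases Sym2.eq_iff.mp hcon with ⟨_, h2⟩ | ⟨h1, _⟩
    · exact hwyb h2
    · exact huyb h1
  have hhnef : s(u, w) ≠ s(u, z) := by
    intro hcon
    rcases Sym2.eq_iff.mp hcon with ⟨_, h2⟩ | ⟨h1, h2⟩
    · exact hwz h2
    · exact hadjz.ne h1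
  have hedgeh : s(u, w) ∈ G.edgeSet := hadjw
  have hedgef : s(u, z) ∈ G.edgeSet := hadjz
  -- a girth cycle through s(u,w)
  obtain ⟨c_h, hch⟩ : {c : G.Subgraph | IsCycleSub G g c ∧ s(u, w) ∈ c.edgeSet}.Nonempty := by
    apply Set.nonempty_of_ncard_ne_zero
    rw [hcnt _ hedgeh]
    omega
  obtain ⟨hchc, hchw⟩ := hch
  obtain ⟨x, Wh, hWh, hWhlen, hceq⟩ := hchc
  have hh : s(u, w) ∈ Wh.edges := by
    rw [hceq, Walk.edgeSet_toSubgraph] at hchw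
    exact hchw
  have hmemch : ∀ d : Sym2 V, d ∈ c_h.edgeSet ↔ d ∈ Wh.edges := by
    intro d
    rw [hceq, Walk.edgeSet_toSubgraph]
    rfl
  have huW : u ∈ Wh.support := mem_support_of_mem_edges' Wh hh (by simp)
  have hmemW : ∀ d, d ∈ (Wh.rotate u huW).edges ↔ d ∈ Wh.edges := fun d =>
    (Wh.rotate_edges u huW).perm.mem_iff
  obtain ⟨d1, d2, hd12, hd1W, hd2W, hud1, hud2, huniq⟩ :=
    cycle_edges_at_start (Wh.rotate u huW) (hWh.rotate huW)
  -- the other edge of the cycle c_h at u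
  obtain ⟨d, hdW, hud, hdh⟩ : ∃ d, d ∈ Wh.edges ∧ u ∈ d ∧ d ≠ s(u, w) := by
    rcases huniq s(u, w) ((hmemW _).mpr hh) (by simp) with rfl | rfl
    · exact ⟨d2, (hmemW _).mp hd2W, hud2, fun hcon => hd12 hcon.symm⟩
    · exact ⟨d1, (hmemW _).mp hd1W, hud1, hd12⟩
  obtain ⟨t, rfl, hadjt⟩ : ∃ t, d = s(u, t) ∧ G.Adj u t := by
    obtain ⟨a, b, rfl⟩ := sym2_out d
    have hadj : G.Adj a b := Wh.edges_subset_edgeSet hdW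
    rcases Sym2.mem_iff.mp hud with rfl | rfl
    · exact ⟨b, rfl, hadj⟩
    · exact ⟨a, Sym2.eq_swap.symm, hadj.symm⟩
  have htN : t ∈ ({yb, z, w} : Set V) := by rw [← hNeq]; exact hadjt
  have hthree : e1 ∈ Wh.edges → False := by
    intro he1W
    have hfW : s(u, z) ∈ Wh.edges := by
      have := hfc c_h ⟨x, Wh, hWh, hWhlen, hceq⟩ ((hmemch e1).mpr he1W)
      exact (hmemch _).mp this
    exact not_three_edges (u := u) hWh he1W hfW hh (by rw [he1uv]; simp) (by simp) (by simp)
      (Ne.symm hfne1) (Ne.symm hhne1) (Ne.symm hhnef)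
  have htN' : t = yb ∨ t = z ∨ t = w := by
    simpa using htN
  rcases htN' with rfl | rfl | rfl
  · -- t = yb : d = e1, contradiction by three edges
    exact hthree (by rw [he1uv]; exact hdW)
  · -- t = z : d = f ; counting argument
    have hfch : s(u, t) ∈ c_h.edgeSet := (hmemch _).mpr hdW
    have he1ch : e1 ∉ c_h.edgeSet := by
      intro hcon
      exact hthree ((hmemch _).mp hcon)
    have hsubset : insert c_h {c : G.Subgraph | IsCycleSub G g c ∧ e1 ∈ c.edgeSet} ⊆
        {c : G.Subgraph | IsCycleSub G g c ∧ s(u, t) ∈ c.edgeSet} := by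
      intro c hc
      rcases hc with rfl | hc
      · exact ⟨⟨x, Wh, hWh, hWhlen, hceq⟩, hfch⟩
      · exact ⟨hc.1, hfc c hc.1 hc.2⟩
    have hnotmem : c_h ∉ {c : G.Subgraph | IsCycleSub G g c ∧ e1 ∈ c.edgeSet} := by
      intro hcon
      exact he1ch hcon.2
    have hcard1 : (insert c_h {c : G.Subgraph | IsCycleSub G g c ∧ e1 ∈ c.edgeSet}).ncard
        = lam + 1 := by
      rw [Set.ncard_insert_of_notMem hnotmem (hfin e1 he1), hcnt e1 he1]
    have hcard2 := Set.ncard_le_ncard hsubset (hfin _ hedgef)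
    rw [hcard1, hcnt _ hedgef] at hcard2
    omega
  · -- t = w : d = s(u,w) contradiction
    exact hdh rfl

lemma big {g lam : ℕ} (hdeg : ∀ x : V, (G.neighborSet x).ncard = 3) (hgirth : G.girth = g)
    (hcnt : ∀ e ∈ G.edgeSet, {c : G.Subgraph | IsCycleSub G g c ∧ e ∈ c.edgeSet}.ncard = lam)
    (hlam : 1 ≤ lam) {e1 e2 : Sym2 V} (he1 : e1 ∈ G.edgeSet) (hne : e1 ≠ e2)
    (hc1 : ∀ c : G.Subgraph, IsCycleSub G g c → e1 ∈ c.edgeSet → e2 ∈ c.edgeSet) : False := by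
  classical
  obtain ⟨c0, hc0⟩ : {c : G.Subgraph | IsCycleSub G g c ∧ e1 ∈ c.edgeSet}.Nonempty := by
    apply Set.nonempty_of_ncard_ne_zero
    rw [hcnt _ he1]
    omega
  obtain ⟨hc0c, hc0e1⟩ := hc0
  obtain ⟨u0, y0, he1eq⟩ := sym2_out e1
  have he2c0 := hc1 c0 hc0c hc0e1
  obtain ⟨α0, β0, he2ab, ⟨D⟩⟩ := build_decomp hc0c (he1eq ▸ hc0e1) he2c0
    (by rw [← he1eq]; exact hne)
  rcases le_or_gt (2 * D.S.length + 2) g with hshort | hlong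
  · exact big_aux hdeg hgirth hcnt hlam he1 hne hc1 he1eq D he2ab hshort
  · have he1eq' : e1 = s(y0, u0) := by rw [he1eq]; exact Sym2.eq_swap
    have he2ab' : e2 = s(β0, α0) := by rw [he2ab]; exact Sym2.eq_swap
    have hshort' : 2 * D.swap.S.length + 2 ≤ g := by
      have h1 := D.hlen
      have h2 : D.swap.S.length = D.R.length := rfl
      omega
    exact big_aux hdeg hgirth hcnt hlam he1 hne hc1 he1eq' D.swap he2ab' hshort'



lemma reach_lift {G' : SimpleGraph V} (hedge : ∀ a b : V, G.Adj a b → G'.Reachable a b)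
    {u v : V} (h : G.Reachable u v) : G'.Reachable u v := by
  obtain ⟨w⟩ := h
  induction w with
  | nil => exact Reachable.refl _
  | cons hadj p ih => exact (hedge _ _ hadj).trans ih

end EGRAux

open EGRAux in
/-- A connected egr(v,3,g,λ)-graph with g ≥ 5 and λ > 2^⌈(g−5)/2⌉ is 3-edge-connected. -/
theorem stmt_9 {V : Type*} (G : SimpleGraph V) (v g lam : ℕ)
    (hG : IsEGR G v 3 g lam) (hg : 5 ≤ g) (hconn : G.Connected)
    (hlam : lam > 2 ^ ((g - 4) / 2)) :
    ∀ s : Finset (Sym2 V), s.card ≤ 2 → (G.deleteEdges ↑s).Connected := by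
  classical
  intro s hs
  obtain ⟨-, hdeg, hgirth, hcnt⟩ := hG
  have hlam1 : 1 ≤ lam := by
    have := pow_pos (by norm_num : (0:ℕ) < 2) ((g - 4) / 2)
    omega
  have key : ∀ a b : V, G.Adj a b → (G.deleteEdges ↑s).Reachable a b := by
    intro a b hab
    by_cases hmem : s(a, b) ∈ (↑s : Set (Sym2 V))
    · by_contra hnr
      have he1 : s(a, b) ∈ G.edgeSet := hab
      have hes : ∀ d : Sym2 V, d ∈ (↑s : Set (Sym2 V)) → d = s(a, b) ∨ d ∈ s.erase s(a, b) := by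
        intro d hd
        rcases eq_or_ne d s(a, b) with h | h
        · exact Or.inl h
        · exact Or.inr (Finset.mem_erase.mpr ⟨h, hd⟩)
      have hlift : ∀ (p : G.Walk b a), (∀ d ∈ p.edges, d ∉ (↑s : Set (Sym2 V))) → False := by
        intro p hp
        exact hnr (Reachable.symm ⟨p.toDeleteEdges ↑s hp⟩)
      by_cases hte : (s.erase s(a, b)).Nonempty
      · obtain ⟨e2, he2t⟩ := hte
        have hne12 : s(a, b) ≠ e2 := Ne.symm (Finset.mem_erase.mp he2t).1
        have htsub : ∀ d ∈ s.erase s(a, b), d = e2 := by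
          intro d hd
          have hcard : (s.erase s(a, b)).card ≤ 1 := by
            have := Finset.card_erase_of_mem (Finset.mem_coe.mp hmem)
            omega
          exact Finset.card_le_one.mp hcard d hd e2 he2t
        have hc1 : ∀ c : G.Subgraph, IsCycleSub G g c → s(a, b) ∈ c.edgeSet →
            e2 ∈ c.edgeSet := by
          intro c hcc hce1
          obtain ⟨x, W, hW, hWlen, hceq⟩ := hcc
          have he1W : s(a, b) ∈ W.edges := by
            rw [hceq, Walk.edgeSet_toSubgraph] at hce1
            exact hce1
          obtain ⟨p, hp, he1p, _, hsub, _⟩ := orient hW he1W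
          by_cases he2p : e2 ∈ p.edges
          · rw [hceq, Walk.edgeSet_toSubgraph]
            exact hsub e2 he2p
          · exfalso
            apply hlift p
            intro d hd hds
            rcases hes d hds with rfl | hdt
            · exact he1p hd
            · exact he2p ((htsub d hdt) ▸ hd)
        exact big hdeg hgirth hcnt hlam1 he1 hne12 hc1
      · obtain ⟨c0, hc0⟩ : {c : G.Subgraph | IsCycleSub G g c ∧ s(a, b) ∈ c.edgeSet}.Nonempty := by
          apply Set.nonempty_of_ncard_ne_zero
          rw [hcnt _ he1]
          omega
        obtain ⟨x, W, hW, hWlen, hceq⟩ := hc0.1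
        have he1W : s(a, b) ∈ W.edges := by
          have := hc0.2
          rw [hceq, Walk.edgeSet_toSubgraph] at this
          exact this
        obtain ⟨p, hp, he1p, _, hsub, _⟩ := orient hW he1W
        apply hlift p
        intro d hd hds
        rcases hes d hds with rfl | hdt
        · exact he1p hd
        · rw [Finset.not_nonempty_iff_eq_empty.mp hte] at hdt
          exact absurd hdt (Finset.notMem_empty d)
    · exact ⟨Walk.cons (SimpleGraph.deleteEdges_adj.mpr ⟨hab, hmem⟩) Walk.nil⟩
  haveI : Nonempty V := hconn.nonempty
  exact ⟨fun u w => reach_lift key (hconn.preconnected u w)⟩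
end

section
/- There is no egr(v,4,4,4)-graph, i.e., there is no 4-regular graph of girth 4 in which every edge lies on exactly 4 cycles of length 4. -/
open SimpleGraph

open scoped Classical

section EGRAux

variable {V : Type} {G : SimpleGraph V}

/-- The neighborhood of `x` as a finset. -/
noncomputable def NF (hfin : ∀ x : V, (G.neighborSet x).Finite) (x : V) : Finset V :=
  (hfin x).toFinset

lemma mem_NF {hfin : ∀ x : V, (G.neighborSet x).Finite} {x y : V} :
    y ∈ NF hfin x ↔ G.Adj x y := by
  simp [NF]

lemma sum3 {f : V → ℕ} {a b c : V} (hab : a ≠ b) (hac : a ≠ c) (hbc : b ≠ c) :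
    ∑ z ∈ ({a, b, c} : Finset V), f z = f a + f b + f c := by
  rw [show ({a, b, c} : Finset V) = insert a (insert b {c}) from rfl,
    Finset.sum_insert (by simp [hab, hac]), Finset.sum_insert (by simp [hbc]),
    Finset.sum_singleton, add_assoc]

lemma doubleCount {α β : Type} (s : Finset α) (t : Finset β) (R : α → β → Prop) :
    ∑ a ∈ s, (t.filter (fun b => R a b)).card
      = ∑ b ∈ t, (s.filter (fun a => R a b)).card := by
  simp_rw [Finset.card_filter]
  exact Finset.sum_comm


lemma card3 {a b c : V} (hab : a ≠ b) (hac : a ≠ c) (hbc : b ≠ c) :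
    ({a, b, c} : Finset V).card = 3 := by
  rw [Finset.card_insert_of_notMem (by simp [hab, hac]),
    Finset.card_insert_of_notMem (by simp [hbc]), Finset.card_singleton]

lemma erase_eq3 {s : Finset V} (h4 : s.card = 4) {x a b c : V}
    (hx : x ∈ s) (ha : a ∈ s) (hb : b ∈ s) (hc : c ∈ s)
    (hax : a ≠ x) (hbx : b ≠ x) (hcx : c ≠ x)
    (hab : a ≠ b) (hac : a ≠ c) (hbc : b ≠ c) :
    s.erase x = {a, b, c} := by
  refine (Finset.eq_of_subset_of_card_le ?_ ?_).symm
  · intro y hy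
    simp only [Finset.mem_insert, Finset.mem_singleton] at hy
    rcases hy with rfl | rfl | rfl <;> exact Finset.mem_erase.mpr ⟨by assumption, by assumption⟩
  · rw [Finset.card_erase_of_mem hx, h4, card3 hab hac hbc]

lemma exists4th {s : Finset V} (h4 : s.card = 4) {x a b : V}
    (hx : x ∈ s) (ha : a ∈ s) (hb : b ∈ s)
    (hax : a ≠ x) (hbx : b ≠ x) (hab : a ≠ b) :
    ∃ c, c ∈ s ∧ c ≠ x ∧ c ≠ a ∧ c ≠ b := by
  have h1 : a ∈ s.erase x := Finset.mem_erase.mpr ⟨hax, ha⟩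
  have h2 : b ∈ (s.erase x).erase a := Finset.mem_erase.mpr ⟨hab.symm, Finset.mem_erase.mpr ⟨hbx, hb⟩⟩
  have hcard : (((s.erase x).erase a).erase b).card = 1 := by
    rw [Finset.card_erase_of_mem h2, Finset.card_erase_of_mem h1, Finset.card_erase_of_mem hx, h4]
  obtain ⟨c, hc⟩ := Finset.card_eq_one.mp hcard
  have hcmem : c ∈ ((s.erase x).erase a).erase b := by rw [hc]; exact Finset.mem_singleton_self c
  obtain ⟨hcb, hcmem⟩ := Finset.mem_erase.mp hcmem
  obtain ⟨hca, hcmem⟩ := Finset.mem_erase.mp hcmem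
  obtain ⟨hcx, hcs⟩ := Finset.mem_erase.mp hcmem
  exact ⟨c, hcs, hcx, hca, hcb⟩

noncomputable def quadSub (G : SimpleGraph V) (u v : V) (p : V × V) : G.Subgraph :=
  if h : G.Adj u v ∧ G.Adj v p.2 ∧ G.Adj p.2 p.1 ∧ G.Adj p.1 u then
    (Walk.cons h.1 (Walk.cons h.2.1 (Walk.cons h.2.2.1
      (Walk.cons h.2.2.2 Walk.nil)))).toSubgraph
  else ⊥

lemma quadSub_eq {u v x y : V} (h1 : G.Adj u v) (h2 : G.Adj v y) (h3 : G.Adj y x)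
    (h4 : G.Adj x u) :
    quadSub G u v (x, y) =
      (Walk.cons h1 (Walk.cons h2 (Walk.cons h3 (Walk.cons h4 Walk.nil)))).toSubgraph :=
  dif_pos ⟨h1, h2, h3, h4⟩

lemma quad_isCycle {u v x y : V} (h1 : G.Adj u v) (h2 : G.Adj v y) (h3 : G.Adj y x)
    (h4 : G.Adj x u) (hyu : y ≠ u) (hxv : x ≠ v) :
    (Walk.cons h1 (Walk.cons h2 (Walk.cons h3 (Walk.cons h4 Walk.nil)))).IsCycle := by
  have huv : u ≠ v := h1.ne
  have hvy : v ≠ y := h2.ne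
  have hyx : y ≠ x := h3.ne
  have hxu : x ≠ u := h4.ne
  rw [Walk.isCycle_def, Walk.isTrail_def]
  refine ⟨?_, by simp, ?_⟩
  · simp only [Walk.edges_cons, Walk.edges_nil, List.nodup_cons, List.mem_cons,
      List.not_mem_nil, or_false, List.mem_singleton, List.nodup_nil, and_true, Sym2.eq,
      Sym2.rel_iff', Prod.mk.injEq, Prod.swap_prod_mk]
    have h1' := huv.symm
    have h2' := hvy.symm
    have h3' := hyx.symm
    have h4' := hxu.symm
    have h5' := hyu.symm
    have h6' := hxv.symm
    tauto
  · simp only [Walk.support_cons, Walk.support_nil, List.tail_cons, List.nodup_cons,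
      List.mem_cons, List.not_mem_nil, or_false, List.mem_singleton, List.nodup_nil, and_true]
    have h1' := huv.symm
    have h2' := hvy.symm
    have h3' := hyx.symm
    have h4' := hxu.symm
    have h5' := hyu.symm
    have h6' := hxv.symm
    tauto

lemma quad_decomp_aux {u v : V} (w : G.Walk u u) (hc : w.IsCycle) (hl : w.length = 4)
    (he : s(u, v) ∈ w.edges) :
    ∃ x y, G.Adj u x ∧ x ≠ v ∧ G.Adj v y ∧ y ≠ u ∧ G.Adj x y ∧
      quadSub G u v (x, y) = w.toSubgraph := by
  cases w with
  | nil => simp at hl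
  | @cons _ b _ h1 w1 =>
    cases w1 with
    | nil => simp at hl
    | @cons _ c _ h2 w2 =>
      cases w2 with
      | nil => simp at hl
      | @cons _ d _ h3 w3 =>
        cases w3 with
        | nil => simp at hl
        | @cons _ e _ h4 w4 =>
          cases w4 with
          | @cons _ f _ h5 w5 => simp [Walk.length_cons] at hl
          | nil =>
            rw [Walk.isCycle_def] at hc
            have hnd := hc.2.2
            simp only [Walk.support_cons, Walk.support_nil, List.tail_cons, List.nodup_cons,
              List.mem_cons, List.not_mem_nil, or_false, List.mem_singleton, List.nodup_nil,
              and_true, not_or] at hnd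
            simp only [Walk.edges_cons, Walk.edges_nil, List.mem_cons, List.not_mem_nil,
              or_false, List.mem_singleton, Sym2.eq, Sym2.rel_iff', Prod.mk.injEq,
              Prod.swap_prod_mk] at he
            obtain ⟨⟨hbc, hbd, hbu⟩, ⟨hcd, hcu⟩, hdu, -⟩ := hnd
            have hrev : (Walk.cons h4.symm (Walk.cons h3.symm (Walk.cons h2.symm
                (Walk.cons h1.symm Walk.nil)))) =
                (Walk.cons h1 (Walk.cons h2 (Walk.cons h3
                  (Walk.cons h4 Walk.nil)))).reverse := rfl
            rcases he with (⟨-, rfl⟩ | ⟨h', -⟩) | (⟨h', -⟩ | ⟨h', -⟩) |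
                (⟨h', -⟩ | ⟨h', -⟩) | (⟨h', -⟩ | ⟨-, rfl⟩)
            · exact ⟨d, c, h4.symm, fun h => hbd h.symm, h2, fun h => hcu h,
                h3.symm, quadSub_eq h1 h2 h3 h4⟩
            · exact absurd h'.symm h1.ne'
            · exact absurd h'.symm h1.ne'
            · exact absurd h' (fun h => hcu h.symm)
            · exact absurd h' (fun h => hcu h.symm)
            · exact absurd h' (fun h => hdu h.symm)
            · exact absurd h' (fun h => hdu h.symm)
            · refine ⟨b, c, h1, fun h => hbd h, h3.symm, fun h => hcu h, h2, ?_⟩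
              rw [quadSub_eq h4.symm h3.symm h2.symm h1.symm, hrev,
                Walk.toSubgraph_reverse]

lemma rowFromCyc (hfin : ∀ x : V, (G.neighborSet x).Finite)
    (hcyc : ∀ e ∈ G.edgeSet, {c : G.Subgraph | IsCycleSub G 4 c ∧ e ∈ c.edgeSet}.ncard = 4)
    {u v : V} (hadj : G.Adj u v) :
    ∑ x ∈ (NF hfin u).erase v, ((NF hfin x ∩ NF hfin v).erase u).card = 4 := by
  set SF : Finset (V × V) :=
    (((NF hfin u).erase v) ×ˢ ((NF hfin v).erase u)).filter (fun p => G.Adj p.1 p.2) with hSFdef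
  have hmem : ∀ p : V × V, p ∈ SF ↔
      G.Adj u p.1 ∧ p.1 ≠ v ∧ G.Adj v p.2 ∧ p.2 ≠ u ∧ G.Adj p.1 p.2 := by
    intro p
    rw [hSFdef, Finset.mem_filter, Finset.mem_product, Finset.mem_erase, Finset.mem_erase,
      mem_NF, mem_NF]
    tauto
  have himg : {c : G.Subgraph | IsCycleSub G 4 c ∧ s(u, v) ∈ c.edgeSet} =
      (quadSub G u v) '' ↑SF := by
    ext csub
    simp only [Set.mem_setOf_eq, Set.mem_image, Finset.mem_coe]
    constructor
    · rintro ⟨⟨a, w, hw, hl, rfl⟩, hecs⟩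
      have he' : s(u, v) ∈ w.edges := (Walk.mem_edges_toSubgraph w).mp hecs
      have hu : u ∈ w.support := w.fst_mem_support_of_mem_edges he'
      have hc' : (w.rotate u hu).IsCycle := hw.rotate hu
      have hl' : (w.rotate u hu).length = 4 := by
        have hp := (w.rotate_edges u hu).perm.length_eq
        rw [Walk.length_edges, Walk.length_edges] at hp
        rw [← hp] at hl
        exact hl
      have he'' : s(u, v) ∈ (w.rotate u hu).edges := (w.rotate_edges u hu).mem_iff.mpr he'
      obtain ⟨x, y, hux, hxv, hvy, hyu, hxy, hq⟩ := quad_decomp_aux (w.rotate u hu) hc' hl' he''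
      refine ⟨(x, y), (hmem (x, y)).mpr ⟨hux, hxv, hvy, hyu, hxy⟩, ?_⟩
      rw [hq, Walk.toSubgraph_rotate]
    · rintro ⟨⟨x, y⟩, hp, rfl⟩
      obtain ⟨hux, hxv, hvy, hyu, hxy⟩ := (hmem (x, y)).mp hp
      have hq := quadSub_eq hadj hvy hxy.symm hux.symm
      constructor
      · exact ⟨u, _, quad_isCycle hadj hvy hxy.symm hux.symm hyu hxv, rfl, hq⟩
      · rw [hq]
        exact (Walk.mem_edges_toSubgraph _).mpr (by simp)
  have hinj : Set.InjOn (quadSub G u v) ↑SF := by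
    rintro ⟨x, y⟩ hp ⟨x', y'⟩ hq hpq
    obtain ⟨hux, hxv, hvy, hyu, hxy⟩ := (hmem (x, y)).mp (Finset.mem_coe.mp hp)
    obtain ⟨hux', hxv', hvy', hyu', hxy'⟩ := (hmem (x', y')).mp (Finset.mem_coe.mp hq)
    have hqp := quadSub_eq hadj hvy hxy.symm hux.symm
    have hqq := quadSub_eq hadj hvy' hxy'.symm hux'.symm
    have he2 : s(v, y) ∈ (quadSub G u v (x', y')).edgeSet := by
      rw [← hpq, hqp]
      exact (Walk.mem_edges_toSubgraph _).mpr (by simp)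
    have he3 : s(x, u) ∈ (quadSub G u v (x', y')).edgeSet := by
      rw [← hpq, hqp]
      exact (Walk.mem_edges_toSubgraph _).mpr (by simp)
    rw [hqq, Walk.mem_edges_toSubgraph] at he2 he3
    simp only [Walk.edges_cons, Walk.edges_nil, List.mem_cons, List.not_mem_nil,
      or_false, List.mem_singleton, Sym2.eq, Sym2.rel_iff', Prod.mk.injEq,
      Prod.swap_prod_mk] at he2 he3
    have huv : u ≠ v := hadj.ne
    have hvy2 : v ≠ y := hvy.ne
    have hvy2' : v ≠ y' := hvy'.ne
    have hux2 : u ≠ x := hux.ne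
    have hux2' : u ≠ x' := hux'.ne
    have hgoal1 : y = y' := by tauto
    have hgoal2 : x = x' := by tauto
    rw [hgoal1, hgoal2]
  have hc4 := hcyc s(u, v) hadj
  rw [himg, Set.ncard_image_of_injOn hinj, Set.ncard_coe_finset] at hc4
  rw [← hc4]
  rw [Finset.card_eq_sum_card_fiberwise (f := Prod.fst) (t := (NF hfin u).erase v)
    (fun p hp => by
      obtain ⟨hux, hxv, _, _, _⟩ := (hmem p).mp hp
      exact Finset.mem_erase.mpr ⟨hxv, mem_NF.mpr hux⟩)]
  refine (Finset.sum_congr rfl ?_).symm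
  intro x hx
  obtain ⟨hxv, hx_u⟩ := Finset.mem_erase.mp hx
  have hux : G.Adj u x := mem_NF.mp hx_u
  have hfib : SF.filter (fun p => p.1 = x) =
      ((NF hfin x ∩ NF hfin v).erase u).image (fun y => (x, y)) := by
    ext ⟨a, b⟩
    simp only [Finset.mem_filter, Finset.mem_image, Finset.mem_erase, Finset.mem_inter,
      mem_NF, hmem, Prod.mk.injEq]
    constructor
    · rintro ⟨⟨hua, hav, hvb, hbu, hab⟩, rfl⟩
      exact ⟨b, ⟨hbu, hab, hvb⟩, rfl, rfl⟩
    · rintro ⟨y, ⟨hyu, hxy2, hvy2⟩, rfl, rfl⟩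
      exact ⟨⟨hux, hxv, hvy2, hyu, hxy2⟩, rfl⟩
  rw [hfib, Finset.card_image_of_injective _ (fun a b hab => by simpa using hab)]

variable (hfin : ∀ x : V, (G.neighborSet x).Finite)
  (hdeg : ∀ x : V, (NF hfin x).card = 4)
  (hrow : ∀ u v : V, G.Adj u v →
    ∑ x ∈ (NF hfin u).erase v, ((NF hfin x ∩ NF hfin v).erase u).card = 4)

section Comb

include hdeg hrow

lemma twinCont {u v a s : V} (hne : u ≠ v) (heq : NF hfin u = NF hfin v)
    (ha : a ∈ NF hfin u) (hs : s ∈ NF hfin u) (hsa : s ≠ a)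
    (ht : ((NF hfin s ∩ NF hfin a).erase u).card = 2) : False := by
  have hadj_ua : G.Adj u a := mem_NF.mp ha
  have hadj_us : G.Adj u s := mem_NF.mp hs
  have hva : a ∈ NF hfin v := heq ▸ ha
  have hvs : s ∈ NF hfin v := heq ▸ hs
  have hadj_va : G.Adj v a := mem_NF.mp hva
  have hadj_vs : G.Adj v s := mem_NF.mp hvs
  have hu_mem : u ∈ NF hfin s ∩ NF hfin a := by
    rw [Finset.mem_inter, mem_NF, mem_NF]; exact ⟨hadj_us.symm, hadj_ua.symm⟩
  have hv_mem : v ∈ NF hfin s ∩ NF hfin a := by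
    rw [Finset.mem_inter, mem_NF, mem_NF]; exact ⟨hadj_vs.symm, hadj_va.symm⟩
  have hvmem' : v ∈ (NF hfin s ∩ NF hfin a).erase u := Finset.mem_erase.mpr ⟨hne.symm, hv_mem⟩
  have hone : (((NF hfin s ∩ NF hfin a).erase u).erase v).card = 1 := by
    rw [Finset.card_erase_of_mem hvmem', ht]
  obtain ⟨p, hp⟩ := Finset.card_eq_one.mp hone
  have hp_mem : p ∈ ((NF hfin s ∩ NF hfin a).erase u).erase v := by
    rw [hp]; exact Finset.mem_singleton_self p
  obtain ⟨hpv, hp_mem⟩ := Finset.mem_erase.mp hp_mem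
  obtain ⟨hpu, hp_sa⟩ := Finset.mem_erase.mp hp_mem
  have hp_s : p ∈ NF hfin s := (Finset.mem_inter.mp hp_sa).1
  have hp_a : p ∈ NF hfin a := (Finset.mem_inter.mp hp_sa).2
  have hau : u ∈ NF hfin a := mem_NF.mpr hadj_ua.symm
  have hav : v ∈ NF hfin a := mem_NF.mpr hadj_va.symm
  obtain ⟨q, hq_a, hqu, hqv, hqp⟩ :=
    exists4th (hdeg a) hau hav hp_a hne.symm hpu hpv.symm
  have hadj_ap : G.Adj a p := mem_NF.mp hp_a
  have hadj_aq : G.Adj a q := mem_NF.mp hq_a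
  -- row (a, u)
  have hr1 := hrow a u hadj_ua.symm
  rw [erase_eq3 (hdeg a) hau hav hp_a hq_a hne.symm hpu hqu hpv.symm hqv.symm hqp.symm,
    sum3 (Ne.symm hpv) (Ne.symm hqv) (Ne.symm hqp)] at hr1
  have hTv : ((NF hfin v ∩ NF hfin u).erase a).card = 3 := by
    rw [← heq, Finset.inter_self, Finset.card_erase_of_mem ha, hdeg u]
  have hs_mem : s ∈ (NF hfin p ∩ NF hfin u).erase a := by
    rw [Finset.mem_erase, Finset.mem_inter, mem_NF, mem_NF]
    exact ⟨hsa, (mem_NF.mp hp_s).symm, hadj_us⟩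
  have hTp : 0 < ((NF hfin p ∩ NF hfin u).erase a).card := Finset.card_pos.mpr ⟨s, hs_mem⟩
  have hTq : ((NF hfin q ∩ NF hfin u).erase a).card = 0 := by omega
  -- row (a, v)
  have hr2 := hrow a v hadj_va.symm
  rw [erase_eq3 (hdeg a) hav hau hp_a hq_a hne hpv hqv (Ne.symm hpu) (Ne.symm hqu)
      (Ne.symm hqp),
    sum3 (Ne.symm hpu) (Ne.symm hqu) (Ne.symm hqp)] at hr2
  have hT'u : ((NF hfin u ∩ NF hfin v).erase a).card = 3 := by
    rw [heq, Finset.inter_self, Finset.card_erase_of_mem hva, hdeg v]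
  have hs_mem2 : s ∈ (NF hfin p ∩ NF hfin v).erase a := by
    rw [Finset.mem_erase, Finset.mem_inter, mem_NF, mem_NF]
    exact ⟨hsa, (mem_NF.mp hp_s).symm, hadj_vs⟩
  have hT'p : 0 < ((NF hfin p ∩ NF hfin v).erase a).card := Finset.card_pos.mpr ⟨s, hs_mem2⟩
  have hT'q : ((NF hfin q ∩ NF hfin v).erase a).card = 0 := by omega
  -- row (a, q)
  have hr3 := hrow a q hadj_aq
  rw [erase_eq3 (hdeg a) hq_a hau hav hp_a (Ne.symm hqu) (Ne.symm hqv) (Ne.symm hqp) hne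
      (Ne.symm hpu) (Ne.symm hpv),
    sum3 hne (Ne.symm hpu) (Ne.symm hpv)] at hr3
  have hSu : ((NF hfin u ∩ NF hfin q).erase a).card = 0 := by rw [Finset.inter_comm]; exact hTq
  have hSv : ((NF hfin v ∩ NF hfin q).erase a).card = 0 := by rw [Finset.inter_comm]; exact hT'q
  have hSp : ((NF hfin p ∩ NF hfin q).erase a).card = 4 := by omega
  have hbound : ((NF hfin p ∩ NF hfin q).erase a).card ≤ 3 := by
    have hsub : (NF hfin p ∩ NF hfin q).erase a ⊆ (NF hfin p).erase a :=
      Finset.erase_subset_erase _ Finset.inter_subset_left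
    have := Finset.card_le_card hsub
    rw [Finset.card_erase_of_mem (mem_NF.mpr hadj_ap.symm), hdeg p] at this
    omega
  omega

lemma twinFalse {u v : V} (hne : u ≠ v) (heq : NF hfin u = NF hfin v) : False := by
  have hpos : 0 < (NF hfin u).card := by rw [hdeg u]; omega
  obtain ⟨a, ha⟩ := Finset.card_pos.mp hpos
  have hadj_ua : G.Adj u a := mem_NF.mp ha
  have h3 : ((NF hfin u).erase a).card = 3 := by
    rw [Finset.card_erase_of_mem ha, hdeg u]
  obtain ⟨s1, s2, s3, h12, h13, h23, he3⟩ := Finset.card_eq_three.mp h3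
  have hm1 : s1 ∈ (NF hfin u).erase a := by rw [he3]; simp
  have hm2 : s2 ∈ (NF hfin u).erase a := by rw [he3]; simp
  have hm3 : s3 ∈ (NF hfin u).erase a := by rw [he3]; simp
  obtain ⟨h1a, h1u⟩ := Finset.mem_erase.mp hm1
  obtain ⟨h2a, h2u⟩ := Finset.mem_erase.mp hm2
  obtain ⟨h3a, h3u⟩ := Finset.mem_erase.mp hm3
  have hr := hrow u a hadj_ua
  rw [he3, sum3 h12 h13 h23] at hr
  have hlb : ∀ z, z ∈ NF hfin u → 0 < ((NF hfin z ∩ NF hfin a).erase u).card := by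
    intro z hz
    refine Finset.card_pos.mpr ⟨v, Finset.mem_erase.mpr ⟨hne.symm, Finset.mem_inter.mpr ⟨?_, ?_⟩⟩⟩
    · exact mem_NF.mpr (mem_NF.mp (heq ▸ hz)).symm
    · exact mem_NF.mpr (mem_NF.mp (heq ▸ ha)).symm
  have hb1 := hlb s1 h1u
  have hb2 := hlb s2 h2u
  have hb3 := hlb s3 h3u
  have hcases : ((NF hfin s1 ∩ NF hfin a).erase u).card = 2 ∨
      ((NF hfin s2 ∩ NF hfin a).erase u).card = 2 ∨
      ((NF hfin s3 ∩ NF hfin a).erase u).card = 2 := by omega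
  rcases hcases with h | h | h
  · exact twinCont hfin hdeg hrow hne heq ha h1u h1a h
  · exact twinCont hfin hdeg hrow hne heq ha h2u h2a h
  · exact twinCont hfin hdeg hrow hne heq ha h3u h3a h

lemma cle3 {u v : V} (hne : u ≠ v) : (NF hfin u ∩ NF hfin v).card ≤ 3 := by
  by_contra h
  have heq1 : NF hfin u ∩ NF hfin v = NF hfin u :=
    Finset.eq_of_subset_of_card_le Finset.inter_subset_left (by rw [hdeg u]; omega)
  have heq2 : NF hfin u ∩ NF hfin v = NF hfin v :=
    Finset.eq_of_subset_of_card_le Finset.inter_subset_right (by rw [hdeg v]; omega)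
  exact twinFalse hfin hdeg hrow hne (heq1.symm.trans heq2)

lemma L2 {a x z1 z2 : V} (hax : G.Adj a x) (h1 : z1 ∈ NF hfin a) (h2 : z2 ∈ NF hfin a)
    (h1x : z1 ≠ x) (h2x : z2 ≠ x) (h12 : z1 ≠ z2)
    (hc1 : (NF hfin x ∩ NF hfin z1).card = 3) (hc2 : (NF hfin x ∩ NF hfin z2).card = 3) :
    False := by
  have hx_a : x ∈ NF hfin a := mem_NF.mpr hax
  obtain ⟨z3, hz3_a, hz3x, hz31, hz32⟩ := exists4th (hdeg a) hx_a h1 h2 h1x h2x h12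
  have hadj_a1 : G.Adj a z1 := mem_NF.mp h1
  have hadj_a2 : G.Adj a z2 := mem_NF.mp h2
  have hadj_a3 : G.Adj a z3 := mem_NF.mp hz3_a
  -- row (a, x)
  have hr1 := hrow a x hax
  rw [erase_eq3 (hdeg a) hx_a h1 h2 hz3_a h1x h2x hz3x h12 (Ne.symm hz31) (Ne.symm hz32),
    sum3 h12 (Ne.symm hz31) (Ne.symm hz32)] at hr1
  have ha_in1 : a ∈ NF hfin z1 ∩ NF hfin x :=
    Finset.mem_inter.mpr ⟨mem_NF.mpr hadj_a1.symm, mem_NF.mpr hax.symm⟩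
  have ha_in2 : a ∈ NF hfin z2 ∩ NF hfin x :=
    Finset.mem_inter.mpr ⟨mem_NF.mpr hadj_a2.symm, mem_NF.mpr hax.symm⟩
  have hT1 : ((NF hfin z1 ∩ NF hfin x).erase a).card = 2 := by
    rw [Finset.card_erase_of_mem ha_in1, Finset.inter_comm (NF hfin z1) (NF hfin x), hc1]
  have hT2 : ((NF hfin z2 ∩ NF hfin x).erase a).card = 2 := by
    rw [Finset.card_erase_of_mem ha_in2, Finset.inter_comm (NF hfin z2) (NF hfin x), hc2]
  have hT3 : ((NF hfin z3 ∩ NF hfin x).erase a).card = 0 := by omega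
  -- row (a, z3)
  have hr2 := hrow a z3 hadj_a3
  rw [erase_eq3 (hdeg a) hz3_a hx_a h1 h2 (Ne.symm hz3x) (Ne.symm hz31) (Ne.symm hz32)
      (Ne.symm h1x) (Ne.symm h2x) h12,
    sum3 (Ne.symm h1x) (Ne.symm h2x) h12] at hr2
  have hUx : ((NF hfin x ∩ NF hfin z3).erase a).card = 0 := by
    rw [Finset.inter_comm (NF hfin x) (NF hfin z3)]; exact hT3
  have ha_in13 : a ∈ NF hfin z1 ∩ NF hfin z3 :=
    Finset.mem_inter.mpr ⟨mem_NF.mpr hadj_a1.symm, mem_NF.mpr hadj_a3.symm⟩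
  have ha_in23 : a ∈ NF hfin z2 ∩ NF hfin z3 :=
    Finset.mem_inter.mpr ⟨mem_NF.mpr hadj_a2.symm, mem_NF.mpr hadj_a3.symm⟩
  have hub1 : ((NF hfin z1 ∩ NF hfin z3).erase a).card ≤ 2 := by
    have := cle3 hfin hdeg hrow (Ne.symm hz31)
    have hcc := Finset.card_erase_of_mem ha_in13
    omega
  have hub2 : ((NF hfin z2 ∩ NF hfin z3).erase a).card ≤ 2 := by
    have := cle3 hfin hdeg hrow (Ne.symm hz32)
    have hcc := Finset.card_erase_of_mem ha_in23
    omega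
  have hU1 : ((NF hfin z1 ∩ NF hfin z3).erase a).card = 2 := by omega
  have hU2 : ((NF hfin z2 ∩ NF hfin z3).erase a).card = 2 := by omega
  -- row (a, z1)
  have hr3 := hrow a z1 hadj_a1
  rw [erase_eq3 (hdeg a) h1 hx_a h2 hz3_a (Ne.symm h1x) (Ne.symm h12) hz31 (Ne.symm h2x)
      (Ne.symm hz3x) (Ne.symm hz32),
    sum3 (Ne.symm h2x) (Ne.symm hz3x) (Ne.symm hz32)] at hr3
  have hWx : ((NF hfin x ∩ NF hfin z1).erase a).card = 2 := by
    have ha_in : a ∈ NF hfin x ∩ NF hfin z1 :=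
      Finset.mem_inter.mpr ⟨mem_NF.mpr hax.symm, mem_NF.mpr hadj_a1.symm⟩
    rw [Finset.card_erase_of_mem ha_in, hc1]
  have hW3 : ((NF hfin z3 ∩ NF hfin z1).erase a).card = 2 := by
    rw [Finset.inter_comm (NF hfin z3) (NF hfin z1)]; exact hU1
  have hW2 : ((NF hfin z2 ∩ NF hfin z1).erase a).card = 0 := by omega
  -- the four pairwise-disjoint 2-sets
  have hE1 : (NF hfin z2 ∩ NF hfin z1).erase a = ∅ := Finset.card_eq_zero.mp hW2
  have hE2 : (NF hfin z3 ∩ NF hfin x).erase a = ∅ := Finset.card_eq_zero.mp hT3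
  set M1 := (NF hfin x ∩ NF hfin z1).erase a with hM1def
  set M2 := (NF hfin x ∩ NF hfin z2).erase a with hM2def
  set M3 := (NF hfin z3 ∩ NF hfin z1).erase a with hM3def
  set M4 := (NF hfin z3 ∩ NF hfin z2).erase a with hM4def
  have hM1 : M1.card = 2 := hWx
  have hM2 : M2.card = 2 := by
    rw [hM2def, Finset.inter_comm (NF hfin x) (NF hfin z2)]; exact hT2
  have hM3 : M3.card = 2 := hW3
  have hM4 : M4.card = 2 := by
    rw [hM4def, Finset.inter_comm (NF hfin z3) (NF hfin z2)]; exact hU2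
  have memM1 : ∀ w ∈ M1, w ≠ a ∧ G.Adj x w ∧ G.Adj z1 w := by
    intro w hw
    obtain ⟨hwa, hw2⟩ := Finset.mem_erase.mp hw
    obtain ⟨hwl, hwr⟩ := Finset.mem_inter.mp hw2
    exact ⟨hwa, mem_NF.mp hwl, mem_NF.mp hwr⟩
  have memM2 : ∀ w ∈ M2, w ≠ a ∧ G.Adj x w ∧ G.Adj z2 w := by
    intro w hw
    obtain ⟨hwa, hw2⟩ := Finset.mem_erase.mp hw
    obtain ⟨hwl, hwr⟩ := Finset.mem_inter.mp hw2
    exact ⟨hwa, mem_NF.mp hwl, mem_NF.mp hwr⟩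
  have memM3 : ∀ w ∈ M3, w ≠ a ∧ G.Adj z3 w ∧ G.Adj z1 w := by
    intro w hw
    obtain ⟨hwa, hw2⟩ := Finset.mem_erase.mp hw
    obtain ⟨hwl, hwr⟩ := Finset.mem_inter.mp hw2
    exact ⟨hwa, mem_NF.mp hwl, mem_NF.mp hwr⟩
  have memM4 : ∀ w ∈ M4, w ≠ a ∧ G.Adj z3 w ∧ G.Adj z2 w := by
    intro w hw
    obtain ⟨hwa, hw2⟩ := Finset.mem_erase.mp hw
    obtain ⟨hwl, hwr⟩ := Finset.mem_inter.mp hw2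
    exact ⟨hwa, mem_NF.mp hwl, mem_NF.mp hwr⟩
  have hd12 : Disjoint M1 M2 := by
    rw [Finset.disjoint_left]
    intro w hwm1 hwm2
    obtain ⟨hwa, hwx1, hwz1⟩ := memM1 w hwm1
    obtain ⟨hwa2, hwx2, hwz2⟩ := memM2 w hwm2
    have hmm : w ∈ (NF hfin z2 ∩ NF hfin z1).erase a := Finset.mem_erase.mpr
      ⟨hwa, Finset.mem_inter.mpr ⟨mem_NF.mpr hwz2, mem_NF.mpr hwz1⟩⟩
    rw [hE1] at hmm
    exact absurd hmm (Finset.notMem_empty w)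
  have hd13 : Disjoint M1 M3 := by
    rw [Finset.disjoint_left]
    intro w hwm1 hwm2
    obtain ⟨hwa, hwx1, hwz1⟩ := memM1 w hwm1
    obtain ⟨hwa2, hwz3, hwzz⟩ := memM3 w hwm2
    have hmm : w ∈ (NF hfin z3 ∩ NF hfin x).erase a := Finset.mem_erase.mpr
      ⟨hwa, Finset.mem_inter.mpr ⟨mem_NF.mpr hwz3, mem_NF.mpr hwx1⟩⟩
    rw [hE2] at hmm
    exact absurd hmm (Finset.notMem_empty w)
  have hd14 : Disjoint M1 M4 := by
    rw [Finset.disjoint_left]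
    intro w hwm1 hwm2
    obtain ⟨hwa, hwx1, hwz1⟩ := memM1 w hwm1
    obtain ⟨hwa2, hwz3, hwzz⟩ := memM4 w hwm2
    have hmm : w ∈ (NF hfin z3 ∩ NF hfin x).erase a := Finset.mem_erase.mpr
      ⟨hwa, Finset.mem_inter.mpr ⟨mem_NF.mpr hwz3, mem_NF.mpr hwx1⟩⟩
    rw [hE2] at hmm
    exact absurd hmm (Finset.notMem_empty w)
  have hd23 : Disjoint M2 M3 := by
    rw [Finset.disjoint_left]
    intro w hwm1 hwm2
    obtain ⟨hwa, hwx1, hwz1⟩ := memM2 w hwm1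
    obtain ⟨hwa2, hwz3, hwzz⟩ := memM3 w hwm2
    have hmm : w ∈ (NF hfin z3 ∩ NF hfin x).erase a := Finset.mem_erase.mpr
      ⟨hwa, Finset.mem_inter.mpr ⟨mem_NF.mpr hwz3, mem_NF.mpr hwx1⟩⟩
    rw [hE2] at hmm
    exact absurd hmm (Finset.notMem_empty w)
  have hd24 : Disjoint M2 M4 := by
    rw [Finset.disjoint_left]
    intro w hwm1 hwm2
    obtain ⟨hwa, hwx1, hwz1⟩ := memM2 w hwm1
    obtain ⟨hwa2, hwz3, hwzz⟩ := memM4 w hwm2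
    have hmm : w ∈ (NF hfin z3 ∩ NF hfin x).erase a := Finset.mem_erase.mpr
      ⟨hwa, Finset.mem_inter.mpr ⟨mem_NF.mpr hwz3, mem_NF.mpr hwx1⟩⟩
    rw [hE2] at hmm
    exact absurd hmm (Finset.notMem_empty w)
  have hd34 : Disjoint M3 M4 := by
    rw [Finset.disjoint_left]
    intro w hwm1 hwm2
    obtain ⟨hwa, hwz3a, hwz1⟩ := memM3 w hwm1
    obtain ⟨hwa2, hwz3b, hwz2⟩ := memM4 w hwm2
    have hmm : w ∈ (NF hfin z2 ∩ NF hfin z1).erase a := Finset.mem_erase.mpr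
      ⟨hwa, Finset.mem_inter.mpr ⟨mem_NF.mpr hwz2, mem_NF.mpr hwz1⟩⟩
    rw [hE1] at hmm
    exact absurd hmm (Finset.notMem_empty w)
  set M := M1 ∪ M2 ∪ M3 ∪ M4 with hMdef
  have hMcard : M.card = 8 := by
    rw [hMdef, Finset.card_union_of_disjoint (by
        rw [Finset.disjoint_union_left, Finset.disjoint_union_left]
        exact ⟨⟨hd14, hd24⟩, hd34⟩),
      Finset.card_union_of_disjoint (by
        rw [Finset.disjoint_union_left]
        exact ⟨hd13, hd23⟩),
      Finset.card_union_of_disjoint hd12, hM1, hM2, hM3, hM4]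
  have hwM_ne : ∀ w ∈ M, w ≠ a := by
    intro w hwM
    rw [hMdef] at hwM
    rcases Finset.mem_union.mp hwM with h4 | h4
    · rcases Finset.mem_union.mp h4 with h5 | h5
      · rcases Finset.mem_union.mp h5 with h6 | h6
        · exact (memM1 w h6).1
        · exact (memM2 w h6).1
      · exact (memM3 w h5).1
    · exact (memM4 w h4).1
  -- double counting
  have hdc := doubleCount (NF hfin a) M (fun n w => G.Adj n w)
  have hL : ∑ n ∈ NF hfin a, (M.filter (fun w => G.Adj n w)).card ≤ 12 := by
    have hb : ∀ n ∈ NF hfin a, (M.filter (fun w => G.Adj n w)).card ≤ 3 := by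
      intro n hn
      have hsub : M.filter (fun w => G.Adj n w) ⊆ (NF hfin n).erase a := by
        intro w hw
        obtain ⟨hwM, hadjnw⟩ := Finset.mem_filter.mp hw
        exact Finset.mem_erase.mpr ⟨hwM_ne w hwM, mem_NF.mpr hadjnw⟩
      have hc := Finset.card_le_card hsub
      rw [Finset.card_erase_of_mem (mem_NF.mpr (mem_NF.mp hn).symm), hdeg n] at hc
      omega
    calc ∑ n ∈ NF hfin a, (M.filter (fun w => G.Adj n w)).card
        ≤ ∑ _n ∈ NF hfin a, 3 := Finset.sum_le_sum hb
      _ = 12 := by rw [Finset.sum_const, hdeg a, smul_eq_mul]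
  have hR : 16 ≤ ∑ w ∈ M, ((NF hfin a).filter (fun n => G.Adj n w)).card := by
    have hb : ∀ w ∈ M, 2 ≤ ((NF hfin a).filter (fun n => G.Adj n w)).card := by
      intro w hw
      have key : ∃ p q, p ∈ NF hfin a ∧ q ∈ NF hfin a ∧ p ≠ q ∧ G.Adj p w ∧ G.Adj q w := by
        rw [hMdef] at hw
        rcases Finset.mem_union.mp hw with h4 | h4
        · rcases Finset.mem_union.mp h4 with h5 | h5
          · rcases Finset.mem_union.mp h5 with h6 | h6
            · obtain ⟨hne1, hxw, hzw⟩ := memM1 w h6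
              exact ⟨x, z1, hx_a, h1, Ne.symm h1x, hxw, hzw⟩
            · obtain ⟨hne1, hxw, hzw⟩ := memM2 w h6
              exact ⟨x, z2, hx_a, h2, Ne.symm h2x, hxw, hzw⟩
          · obtain ⟨hne1, hxw, hzw⟩ := memM3 w h5
            exact ⟨z3, z1, hz3_a, h1, hz31, hxw, hzw⟩
        · obtain ⟨hne1, hxw, hzw⟩ := memM4 w h4
          exact ⟨z3, z2, hz3_a, h2, hz32, hxw, hzw⟩
      obtain ⟨p, q, hpa, hqa, hpq, hpw, hqw⟩ := key
      have hsub : ({p, q} : Finset V) ⊆ (NF hfin a).filter (fun n => G.Adj n w) := by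
        intro y hy
        rcases Finset.mem_insert.mp hy with rfl | hy2
        · exact Finset.mem_filter.mpr ⟨hpa, hpw⟩
        · rw [Finset.mem_singleton.mp hy2]
          exact Finset.mem_filter.mpr ⟨hqa, hqw⟩
      have h2c : ({p, q} : Finset V).card = 2 := by
        rw [Finset.card_insert_of_notMem (by simp [hpq]), Finset.card_singleton]
      have := Finset.card_le_card hsub
      omega
    calc (16 : ℕ) = ∑ _w ∈ M, 2 := by rw [Finset.sum_const, hMcard, smul_eq_mul]
      _ ≤ ∑ w ∈ M, ((NF hfin a).filter (fun n => G.Adj n w)).card := Finset.sum_le_sum hb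
  omega

lemma L3 {n x : V} (hnx : G.Adj n x) :
    ∃ z, z ∈ NF hfin n ∧ z ≠ x ∧ (NF hfin x ∩ NF hfin z).card = 3 := by
  have hx_n : x ∈ NF hfin n := mem_NF.mpr hnx
  have hcard : ((NF hfin n).erase x).card = 3 := by
    rw [Finset.card_erase_of_mem hx_n, hdeg n]
  obtain ⟨a, b, c, hab, hac, hbc, h3⟩ := Finset.card_eq_three.mp hcard
  have ham : a ∈ (NF hfin n).erase x := by rw [h3]; simp
  have hbm : b ∈ (NF hfin n).erase x := by rw [h3]; simp
  have hcm : c ∈ (NF hfin n).erase x := by rw [h3]; simp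
  obtain ⟨hax, han⟩ := Finset.mem_erase.mp ham
  obtain ⟨hbx, hbn⟩ := Finset.mem_erase.mp hbm
  obtain ⟨hcx, hcn⟩ := Finset.mem_erase.mp hcm
  have hr := hrow n x hnx
  rw [h3, sum3 hab hac hbc] at hr
  have key : ∀ z, z ∈ NF hfin n → z ≠ x → ((NF hfin z ∩ NF hfin x).erase n).card = 2 →
      (NF hfin x ∩ NF hfin z).card = 3 := by
    intro z hz hzx h2
    have hn_in : n ∈ NF hfin z ∩ NF hfin x :=
      Finset.mem_inter.mpr ⟨mem_NF.mpr (mem_NF.mp hz).symm, mem_NF.mpr hnx.symm⟩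
    have hce := Finset.card_erase_of_mem hn_in
    have hpos := Finset.card_pos.mpr ⟨n, hn_in⟩
    rw [Finset.inter_comm (NF hfin x) (NF hfin z)]
    omega
  have hub : ∀ z, z ∈ NF hfin n → z ≠ x → ((NF hfin z ∩ NF hfin x).erase n).card ≤ 2 := by
    intro z hz hzx
    have hn_in : n ∈ NF hfin z ∩ NF hfin x :=
      Finset.mem_inter.mpr ⟨mem_NF.mpr (mem_NF.mp hz).symm, mem_NF.mpr hnx.symm⟩
    have h1 := Finset.card_erase_of_mem hn_in
    have h2 := cle3 hfin hdeg hrow hzx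
    omega
  have hA := hub a han hax
  have hB := hub b hbn hbx
  have hC := hub c hcn hcx
  have hcases : ((NF hfin a ∩ NF hfin x).erase n).card = 2 ∨
      ((NF hfin b ∩ NF hfin x).erase n).card = 2 ∨
      ((NF hfin c ∩ NF hfin x).erase n).card = 2 := by omega
  rcases hcases with h | h | h
  · exact ⟨a, han, hax, key a han hax h⟩
  · exact ⟨b, hbn, hbx, key b hbn hbx h⟩
  · exact ⟨c, hcn, hcx, key c hcn hcx h⟩

lemma combFalse (x0 : V) : False := by
  have hpos : 0 < (NF hfin x0).card := by rw [hdeg x0]; omega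
  obtain ⟨n0, hn0⟩ := Finset.card_pos.mp hpos
  have hadj0 : G.Adj n0 x0 := (mem_NF.mp hn0).symm
  obtain ⟨z1, hz1_n0, hz1x0, hcz1⟩ := L3 hfin hdeg hrow hadj0
  by_cases hex : ∃ n ∈ NF hfin x0, ∃ z, z ∈ NF hfin n ∧ z ≠ x0 ∧
      (NF hfin x0 ∩ NF hfin z).card = 3 ∧ z ≠ z1
  · obtain ⟨n, hn, z2, hz2_n, hz2x0, hcz2, hz21⟩ := hex
    set S1 := NF hfin x0 ∩ NF hfin z1 with hS1def
    set S2 := NF hfin x0 ∩ NF hfin z2 with hS2def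
    have hUn : (S1 ∪ S2).card ≤ 4 := by
      have hsub : S1 ∪ S2 ⊆ NF hfin x0 := by
        rw [hS1def, hS2def, Finset.union_subset_iff]
        exact ⟨Finset.inter_subset_left, Finset.inter_subset_left⟩
      have := Finset.card_le_card hsub
      rwa [hdeg x0] at this
    have hIn : 0 < (S1 ∩ S2).card := by
      have := Finset.card_union_add_card_inter S1 S2
      rw [hcz1, hcz2] at this
      omega
    obtain ⟨A, hA⟩ := Finset.card_pos.mp hIn
    obtain ⟨hA1, hA2⟩ := Finset.mem_inter.mp hA
    have hAx0 : G.Adj x0 A := mem_NF.mp (Finset.mem_inter.mp hA1).1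
    have hAz1 : G.Adj z1 A := mem_NF.mp (Finset.mem_inter.mp hA1).2
    have hAz2 : G.Adj z2 A := mem_NF.mp (Finset.mem_inter.mp hA2).2
    exact L2 hfin hdeg hrow hAx0.symm (mem_NF.mpr hAz1.symm) (mem_NF.mpr hAz2.symm)
      hz1x0 hz2x0 (fun h => hz21 h.symm) hcz1 hcz2
  · push_neg at hex
    have hsub : NF hfin x0 ⊆ NF hfin z1 := by
      intro n hn2
      obtain ⟨z, hz_n, hzx0, hcz⟩ := L3 hfin hdeg hrow ((mem_NF.mp hn2).symm)
      have hzz := hex n hn2 z hz_n hzx0 hcz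
      rw [hzz] at hz_n
      exact mem_NF.mpr (mem_NF.mp hz_n).symm
    have hinter : NF hfin x0 ∩ NF hfin z1 = NF hfin x0 := Finset.inter_eq_left.mpr hsub
    rw [hinter, hdeg x0] at hcz1
    omega

end Comb

end EGRAux

/-- There is no egr(v,4,4,4)-graph. -/
theorem stmt_10 : ¬ ∃ (V : Type) (G : SimpleGraph V) (v : ℕ), IsEGR G v 4 4 4 := by
  rintro ⟨V, G, v, hV, hdeg, hgirth, hcyc⟩
  -- finiteness of neighborhoods
  have hfin : ∀ x : V, (G.neighborSet x).Finite := by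
    intro x
    by_contra h
    have := Set.Infinite.ncard h
    rw [hdeg x] at this
    omega
  have hcard : ∀ x : V, (NF hfin x).card = 4 := by
    intro x
    have := Set.ncard_eq_toFinset_card (G.neighborSet x) (hfin x)
    rw [hdeg x] at this
    exact this.symm
  -- there is a vertex
  have hnacyc : ¬ G.IsAcyclic := by
    intro hA
    have := hA.girth_eq_zero
    rw [hgirth] at this
    omega
  obtain ⟨a, w, hw, hl⟩ := SimpleGraph.exists_girth_eq_length.mpr hnacyc
  -- the row lemma
  have hrow : ∀ u v : V, G.Adj u v →
      ∑ x ∈ (NF hfin u).erase v, ((NF hfin x ∩ NF hfin v).erase u).card = 4 :=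
    fun u' v' hadj => rowFromCyc hfin hcyc hadj
  exact combFalse hfin hcard hrow a
end

section
/- In an egr(v,3,8,2t)-graph, every path subgraph on 6 vertices is contained in at most 1 cycle of length 8, every path subgraph on 5 vertices in at most 2 such cycles, and every path subgraph on 4 vertices in at most 4 such cycles. -/
set_option linter.unnecessarySimpa false

open SimpleGraph

namespace EgrAux

variable {V : Type*} {G : SimpleGraph V}

/-- If a path from `s` contains an edge `s(s,x)`, it starts with it. -/
lemma firstEdge {s b x : V} (P : G.Walk s b) (hP : P.IsPath) (hx : s(s, x) ∈ P.edges) :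
    ∃ (h : G.Adj s x) (P' : G.Walk x b), P = Walk.cons h P' := by
  cases P with
  | nil => simp at hx
  | cons h' P'' =>
    rw [Walk.edges_cons, List.mem_cons] at hx
    rcases hx with hx | hx
    · rw [Sym2.eq_iff] at hx
      rcases hx with ⟨-, rfl⟩ | ⟨rfl, rfl⟩
      · exact ⟨h', P'', rfl⟩
      · exact absurd rfl h'.ne
    · exfalso
      have hs : s ∈ P''.support := Walk.fst_mem_support_of_mem_edges _ hx
      rw [Walk.cons_isPath_iff] at hP
      exact hP.2 hs

/-- A path whose edges lie in a path with the same start is a prefix of it. -/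
lemma prefix_of_path {s t : V} (u : G.Walk s t) :
    ∀ {b : V} (P : G.Walk s b), u.IsPath → P.IsPath → (∀ e ∈ u.edges, e ∈ P.edges) →
      ∃ r : G.Walk t b, P = u.append r := by
  induction u with
  | nil => exact fun P _ _ _ => ⟨P, by simp⟩
  | @cons s x t h u' ih =>
    intro b P hu hP hsub
    obtain ⟨h', P', rfl⟩ := firstEdge P hP (hsub s(s,x) (by simp))
    rw [Walk.cons_isPath_iff] at hu hP
    have hsub' : ∀ e ∈ u'.edges, e ∈ P'.edges := by
      intro e he
      have h2 := hsub e (by simp [he])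
      rw [Walk.edges_cons, List.mem_cons] at h2
      rcases h2 with rfl | h2
      · exact absurd (Walk.fst_mem_support_of_mem_edges u' he) hu.2
      · exact h2
    obtain ⟨r, hr⟩ := ih P' hu.1 hP.1 hsub'
    exact ⟨r, by rw [hr, Walk.cons_append]⟩


lemma arc_of_cycle_aux {s x t : V} (h : G.Adj s x) (u₀ : G.Walk x t) (W₀ : G.Walk x s)
    (hu : (Walk.cons h u₀).IsPath) (hc : (Walk.cons h W₀).IsCycle)
    (hsub : ∀ e ∈ (Walk.cons h u₀).edges, e ∈ (Walk.cons h W₀).edges) :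
    ∃ r : G.Walk t s, Walk.cons h W₀ = (Walk.cons h u₀).append r := by
  rw [Walk.cons_isPath_iff] at hu
  rw [Walk.cons_isCycle_iff] at hc
  have hsub' : ∀ e ∈ u₀.edges, e ∈ W₀.edges := by
    intro e he
    have h2 := hsub e (by simp [he])
    rw [Walk.edges_cons, List.mem_cons] at h2
    rcases h2 with rfl | h2
    · exact absurd (Walk.fst_mem_support_of_mem_edges u₀ he) hu.2
    · exact h2
  obtain ⟨r, hr⟩ := prefix_of_path u₀ W₀ hu.1 hc.1 hsub'
  exact ⟨r, by rw [hr, Walk.cons_append]⟩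

lemma isCycle_reverse {v : V} {w : G.Walk v v} (hw : w.IsCycle) : w.reverse.IsCycle := by
  rw [Walk.isCycle_def] at hw ⊢
  refine ⟨hw.1.reverse, ?_, ?_⟩
  · intro h
    apply hw.2.1
    simpa using congrArg Walk.reverse h
  · rw [Walk.support_reverse, List.tail_reverse, List.nodup_reverse]
    have hL : w.support.tail ≠ [] := by
      cases w with
      | nil => exact absurd rfl hw.2.1
      | cons h q => simpa using q.support_ne_nil
    obtain ⟨x0, L0, hL0⟩ := List.exists_cons_of_ne_nil hL
    have A : w.support.tail.getLast? = some v := by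
      have A0 : w.support.getLast? = some v := by
        rw [List.getLast?_eq_getLast_of_ne_nil w.support_ne_nil, w.getLast_support]
      rw [w.support_eq_cons, hL0, List.getLast?_cons_cons] at A0
      rw [hL0]; exact A0
    have hsplit : w.support.tail.dropLast ++ [v] = w.support.tail :=
      List.dropLast_append_getLast? v A
    have hnod : (w.support.tail.dropLast ++ [v]).Nodup := by rw [hsplit]; exact hw.2.2
    rw [List.nodup_append] at hnod
    have hgoal : w.support.dropLast = v :: w.support.tail.dropLast := by
      conv_lhs => rw [w.support_eq_cons]
      exact List.dropLast_cons_of_ne_nil hL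
    rw [hgoal, List.nodup_cons]
    exact ⟨fun hmem => hnod.2.2 v hmem v (by simp) rfl, hnod.1⟩

lemma arc_of_cycle {s x t : V} (h : G.Adj s x) (u₀ : G.Walk x t) (w : G.Walk s s)
    (hu : (Walk.cons h u₀).IsPath) (hw : w.IsCycle)
    (hsub : ∀ e ∈ (Walk.cons h u₀).edges, e ∈ w.edges) :
    ∃ r : G.Walk t s,
      w = (Walk.cons h u₀).append r ∨ w.reverse = (Walk.cons h u₀).append r := by
  cases w with
  | nil => exact absurd rfl hw.ne_nil
  | @cons _ y _ hw₀ w₀ =>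
    have hx : s(s, x) ∈ (Walk.cons hw₀ w₀).edges := hsub s(s,x) (by simp)
    rw [Walk.edges_cons, List.mem_cons] at hx
    rcases hx with hx | hx
    · rw [Sym2.eq_iff] at hx
      rcases hx with ⟨-, rfl⟩ | ⟨rfl, rfl⟩
      · obtain ⟨r, hr⟩ := arc_of_cycle_aux h u₀ w₀ hu hw hsub
        exact ⟨r, Or.inl hr⟩
      · exact absurd rfl h.ne
    · -- the cycle starts with the reverse direction
      have hw' := (Walk.cons_isCycle_iff w₀ hw₀).mp hw
      have hx' : s(s, x) ∈ w₀.reverse.edges := by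
        rw [Walk.edges_reverse, List.mem_reverse]; exact hx
      obtain ⟨h₁, m, hm⟩ := firstEdge w₀.reverse hw'.1.reverse hx'
      have hrev : (Walk.cons hw₀ w₀).reverse
          = Walk.cons h₁ (m.append (Walk.cons hw₀.symm Walk.nil)) := by
        rw [Walk.reverse_cons, hm, Walk.cons_append]
      have hcyc' : (Walk.cons h₁ (m.append (Walk.cons hw₀.symm Walk.nil))).IsCycle := by
        rw [← hrev]; exact isCycle_reverse hw
      have hsub' : ∀ e ∈ (Walk.cons h u₀).edges,
          e ∈ (Walk.cons h₁ (m.append (Walk.cons hw₀.symm Walk.nil))).edges := by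
        intro e he
        rw [← hrev, Walk.edges_reverse, List.mem_reverse]
        exact hsub e he
      obtain ⟨r, hr⟩ := arc_of_cycle_aux h₁ u₀ _ hu hcyc' hsub'
      exact ⟨r, Or.inr (hrev.trans hr)⟩

lemma length_rotate' [DecidableEq V] {u v : V} (c : G.Walk v v) (h : u ∈ c.support) :
    (c.rotate u h).length = c.length := by
  rw [Walk.rotate, Walk.length_append, add_comm, ← Walk.length_append, Walk.take_spec]


lemma path_ends_ne {s t : V} (u : G.Walk s t) (hu : u.IsPath) (h : 0 < u.length) : s ≠ t := by
  rintro rfl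
  rw [Walk.isPath_iff_eq_nil] at hu
  rw [hu] at h
  simp at h

lemma cycle_decomp {s t a : V} (u : G.Walk s t) (w : G.Walk a a)
    (hu : u.IsPath) (hul : 1 ≤ u.length) (hw : w.IsCycle)
    (hle : u.toSubgraph ≤ w.toSubgraph) :
    ∃ r : G.Walk t s, r.IsPath ∧ (u.append r).IsCycle ∧
      (u.append r).toSubgraph = w.toSubgraph ∧ u.length + r.length = w.length ∧
      (∀ z ∈ u.support.tail, z ∉ r.support.tail) := by
  classical
  have hst : s ≠ t := path_ends_ne u hu (by omega)
  have hs : s ∈ w.support := by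
    have h1 := hle.1 u.start_mem_verts_toSubgraph
    rwa [Walk.mem_verts_toSubgraph] at h1
  have hw' : (w.rotate s hs).IsCycle := hw.rotate hs
  have hsub : ∀ e ∈ u.edges, e ∈ (w.rotate s hs).edges := by
    intro e he
    have h1 : e ∈ u.toSubgraph.edgeSet := by rwa [Walk.mem_edges_toSubgraph]
    have h2 := Subgraph.edgeSet_mono hle h1
    rw [← Walk.toSubgraph_rotate w hs] at h2
    rwa [Walk.mem_edges_toSubgraph] at h2
  obtain ⟨r, hr⟩ : ∃ r : G.Walk t s,
      w.rotate s hs = u.append r ∨ (w.rotate s hs).reverse = u.append r := by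
    cases u with
    | nil => simp at hul
    | cons h u₀ => exact arc_of_cycle h u₀ (w.rotate s hs) hu hw' hsub
  have hWc : (u.append r).IsCycle := by
    rcases hr with hr | hr
    · rw [← hr]; exact hw'
    · rw [← hr]; exact isCycle_reverse hw'
  have hWsub : (u.append r).toSubgraph = w.toSubgraph := by
    rcases hr with hr | hr
    · rw [← hr, Walk.toSubgraph_rotate]
    · rw [← hr, Walk.toSubgraph_reverse, Walk.toSubgraph_rotate]
  have hWlen : u.length + r.length = w.length := by
    have hrot := length_rotate' w hs
    rcases hr with hr | hr
    · rw [← Walk.length_append, ← hr, hrot]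
    · rw [← Walk.length_append, ← hr, Walk.length_reverse, hrot]
  have hnodup : (u.support.tail ++ r.support.tail).Nodup := by
    rw [← Walk.tail_support_append]
    exact ((Walk.isCycle_def _).mp hWc).2.2
  rw [List.nodup_append] at hnodup
  have hdisj : ∀ z ∈ u.support.tail, z ∉ r.support.tail := fun z hz hz' => hnodup.2.2 z hz z hz' rfl
  have htmem : t ∈ u.support.tail := by
    have h1 := u.end_mem_support
    rw [u.support_eq_cons, List.mem_cons] at h1
    rcases h1 with h1 | h1
    · exact absurd h1.symm hst
    · exact h1
  have hrpath : r.IsPath := by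
    apply Walk.IsPath.mk'
    rw [r.support_eq_cons, List.nodup_cons]
    exact ⟨hdisj t htmem, hnodup.2.1⟩
  exact ⟨r, hrpath, hWc, hWsub, hWlen, hdisj⟩

lemma shortcycle {a b : V} (p : G.Walk a b) :
    ∀ (q : G.Walk a b), p.IsPath → q.IsPath → p ≠ q →
      ∃ (c : V) (w : G.Walk c c), w.IsCycle ∧ w.length ≤ p.length + q.length := by
  induction p with
  | nil =>
    intro q _ hq hne
    rw [Walk.isPath_iff_eq_nil] at hq
    exact absurd hq.symm hne
  | @cons a x b h p' ih =>
    intro q hp hq hne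
    classical
    cases q with
    | nil =>
      rw [Walk.isPath_iff_eq_nil] at hp
      simp at hp
    | @cons _ y _ h2 q' =>
      by_cases hxy : x = y
      · subst hxy
        have hne' : p' ≠ q' := by rintro rfl; exact hne rfl
        rw [Walk.cons_isPath_iff] at hp hq
        obtain ⟨c, w, hw, hwl⟩ := ih q' hp.1 hq.1 hne'
        exact ⟨c, w, hw, by simp only [Walk.length_cons]; omega⟩
      · -- first edges differ; build a cycle through a
        rw [Walk.cons_isPath_iff] at hp hq
        set W : G.Walk x a := p'.append (Walk.cons h2 q').reverse with hWdef
        have hWe : s(a, x) ∉ W.edges := by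
          rw [hWdef, Walk.edges_append, Walk.edges_reverse]
          intro hmem
          rcases List.mem_append.mp hmem with hmem | hmem
          · exact hp.2 (Walk.fst_mem_support_of_mem_edges p' hmem)
          · rw [List.mem_reverse, Walk.edges_cons, List.mem_cons] at hmem
            rcases hmem with hmem | hmem
            · rw [Sym2.eq_iff] at hmem
              rcases hmem with ⟨-, h'⟩ | ⟨-, h'⟩
              · exact hxy h'
              · exact h.ne h'.symm
            · exact hq.2 (Walk.fst_mem_support_of_mem_edges q' hmem)
        have hbp : s(a, x) ∉ W.bypass.edges := fun hmem => hWe (W.edges_bypass_subset hmem)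
        have hcyc : (Walk.cons h W.bypass).IsCycle :=
          (Walk.cons_isCycle_iff W.bypass h).mpr ⟨W.bypass_isPath, hbp⟩
        refine ⟨a, Walk.cons h W.bypass, hcyc, ?_⟩
        have hlb := W.length_bypass_le
        have : W.length = p'.length + (q'.length + 1) := by
          rw [hWdef, Walk.length_append, Walk.length_reverse, Walk.length_cons]
        simp only [Walk.length_cons]
        omega


lemma decomp3 {a b : V} (w : G.Walk a b) (hlen : w.length = 3) :
    ∃ (x1 x2 : V) (h1 : G.Adj a x1) (h2 : G.Adj x1 x2) (h3 : G.Adj x2 b),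
      w = Walk.cons h1 (Walk.cons h2 (Walk.cons h3 Walk.nil)) := by
  cases w with
  | nil => simp at hlen
  | cons h1 q1 =>
    cases q1 with
    | nil => simp at hlen
    | cons h2 q2 =>
      cases q2 with
      | nil => simp at hlen
      | cons h3 q3 =>
        cases q3 with
        | nil => exact ⟨_, _, h1, h2, h3, rfl⟩
        | cons h4 q4 => simp only [Walk.length_cons, Walk.length_nil] at hlen; omega

lemma decomp4 {a b : V} (w : G.Walk a b) (hlen : w.length = 4) :
    ∃ (x1 x2 x3 : V) (h1 : G.Adj a x1) (h2 : G.Adj x1 x2) (h3 : G.Adj x2 x3)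
      (h4 : G.Adj x3 b),
      w = Walk.cons h1 (Walk.cons h2 (Walk.cons h3 (Walk.cons h4 Walk.nil))) := by
  cases w with
  | nil => simp at hlen
  | cons h1 q1 =>
    obtain ⟨x2, x3, k1, k2, k3, rfl⟩ := decomp3 q1 (by simp only [Walk.length_cons] at hlen; omega)
    exact ⟨_, _, _, h1, k1, k2, k3, rfl⟩

lemma decomp5 {a b : V} (w : G.Walk a b) (hlen : w.length = 5) :
    ∃ (x1 x2 x3 x4 : V) (h1 : G.Adj a x1) (h2 : G.Adj x1 x2) (h3 : G.Adj x2 x3)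
      (h4 : G.Adj x3 x4) (h5 : G.Adj x4 b),
      w = Walk.cons h1 (Walk.cons h2 (Walk.cons h3 (Walk.cons h4 (Walk.cons h5 Walk.nil)))) := by
  cases w with
  | nil => simp at hlen
  | cons h1 q1 =>
    obtain ⟨x2, x3, x4, k1, k2, k3, k4, rfl⟩ :=
      decomp4 q1 (by simp only [Walk.length_cons] at hlen; omega)
    exact ⟨_, _, _, _, h1, k1, k2, k3, k4, rfl⟩


end EgrAux

/-- In an egr(v,3,8,2t)-graph: any P₆ lies on at most 1 shortest cycle, any P₅ on at most 2,
and any P₄ on at most 4. -/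
theorem stmt_11 {V : Type*} (G : SimpleGraph V) (v t : ℕ)
    (hG : IsEGR G v 3 8 (2 * t)) :
    (∀ p : G.Subgraph, IsPathSub G 6 p →
      {c : G.Subgraph | IsCycleSub G 8 c ∧ p ≤ c}.ncard ≤ 1) ∧
    (∀ p : G.Subgraph, IsPathSub G 5 p →
      {c : G.Subgraph | IsCycleSub G 8 c ∧ p ≤ c}.ncard ≤ 2) ∧
    (∀ p : G.Subgraph, IsPathSub G 4 p →
      {c : G.Subgraph | IsCycleSub G 8 c ∧ p ≤ c}.ncard ≤ 4) := by
  obtain ⟨-, hreg, hgirth, -⟩ := hG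
  have hcyc : ∀ (a : V) (w : G.Walk a a), w.IsCycle → 8 ≤ w.length := by
    intro a w hw
    have h8 : G.egirth = (8 : ℕ∞) := by
      unfold SimpleGraph.girth at hgirth
      rwa [ENat.toNat_eq_iff (by norm_num)] at hgirth
    have hle := SimpleGraph.le_egirth.mp h8.ge a w hw
    exact_mod_cast hle
  have pathUnique : ∀ {a b : V} (p q : G.Walk a b), p.IsPath → q.IsPath →
      p.length + q.length < 8 → p = q := by
    intro a b p q hp hq hlen
    by_contra hne
    obtain ⟨c, w, hw, hwl⟩ := EgrAux.shortcycle p q hp hq hne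
    have := hcyc c w hw
    omega
  have key : ∀ {s t : V} (u : G.Walk s t), u.IsPath → 1 ≤ u.length →
      ∀ c ∈ {c : G.Subgraph | IsCycleSub G 8 c ∧ u.toSubgraph ≤ c},
      ∃ r : G.Walk t s, r.IsPath ∧ u.length + r.length = 8 ∧
        (u.append r).toSubgraph = c ∧ (∀ z ∈ u.support.tail, z ∉ r.support.tail) := by
    rintro s t u hu hul c ⟨⟨a, w, hw, hwl, rfl⟩, hpc⟩
    obtain ⟨r, h1, _, h3, h4, h5⟩ := EgrAux.cycle_decomp u w hu hul hw hpc
    exact ⟨r, h1, by omega, h3, h5⟩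
  have hNfin : ∀ x : V, (G.neighborSet x).Finite := by
    intro x
    by_contra hinf
    have h0 : (G.neighborSet x).ncard = 0 := Set.Infinite.ncard hinf
    rw [hreg x] at h0
    omega
  refine ⟨?_, ?_, ?_⟩
  · -- P₆ : path on 6 vertices, at most 1 cycle
    rintro p ⟨s, t, u, hu, hulen, rfl⟩
    have hss : {c : G.Subgraph | IsCycleSub G 8 c ∧ u.toSubgraph ≤ c}.Subsingleton := by
      intro c1 h1 c2 h2
      obtain ⟨r1, hr1p, hr1l, hr1s, -⟩ := key u hu (by omega) c1 h1
      obtain ⟨r2, hr2p, hr2l, hr2s, -⟩ := key u hu (by omega) c2 h2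
      have hr : r1 = r2 := pathUnique r1 r2 hr1p hr2p (by omega)
      rw [← hr1s, ← hr2s, hr]
    rcases hss.eq_empty_or_singleton with h | ⟨x, h⟩ <;> rw [h] <;> simp
  · -- P₅ : path on 5 vertices, at most 2 cycles
    rintro p ⟨s, t, u, hu, hulen, rfl⟩
    have hul4 : u.length = 4 := by omega
    obtain ⟨v1, v2, v3, h1, h2, h3, h4, rfl⟩ := EgrAux.decomp4 u hul4
    set u : G.Walk s t :=
      Walk.cons h1 (Walk.cons h2 (Walk.cons h3 (Walk.cons h4 Walk.nil))) with hudef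
    have hts : t ≠ s := (EgrAux.path_ends_ne u hu (by omega)).symm
    have hv3 : v3 ∈ G.neighborSet t := h4.symm
    have hTcard : ((G.neighborSet t) \ {v3}).ncard = 2 := by
      rw [Set.ncard_diff_singleton_of_mem hv3, hreg t]
    haveI : Finite ↥((G.neighborSet t) \ {v3}) := ((hNfin t).diff).to_subtype
    set S := {c : G.Subgraph | IsCycleSub G 8 c ∧ u.toSubgraph ≤ c} with hSdef
    have key' := key u hu (by omega)
    choose r hrP hrL hrS hrD using key'
    have hmem : ∀ (c : G.Subgraph) (hc : c ∈ S),
        (r c hc).getVert 1 ∈ G.neighborSet t \ {v3} := by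
      intro c hc
      have hrlen : (r c hc).length = 4 := by have := hrL c hc; omega
      constructor
      · have h0 : 0 < (r c hc).length := by omega
        have hadj := Walk.toSubgraph_adj_getVert (r c hc) h0
        rw [Walk.getVert_zero] at hadj
        exact hadj.adj_sub
      · simp only [Set.mem_singleton_iff]
        intro heq
        obtain ⟨x, hx, r', hr'⟩ := Walk.exists_eq_cons_of_ne hts (r c hc)
        have hxmem : (r c hc).getVert 1 ∈ (r c hc).support.tail := by
          rw [hr']
          simp [Walk.getVert_cons_succ, Walk.support_cons]
        have hv3mem : v3 ∈ u.support.tail := by simp [hudef, Walk.support_cons]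
        exact hrD c hc v3 hv3mem (heq ▸ hxmem)
    have hinj : Function.Injective
        (fun c : ↥S => (⟨(r c.1 c.2).getVert 1, hmem c.1 c.2⟩ :
          ↥(G.neighborSet t \ {v3}))) := by
      rintro ⟨c1, hc1⟩ ⟨c2, hc2⟩ hf
      simp only [Subtype.mk.injEq] at hf
      obtain ⟨x1, hx1, r1', e1⟩ := Walk.exists_eq_cons_of_ne hts (r c1 hc1)
      obtain ⟨x2, hx2, r2', e2⟩ := Walk.exists_eq_cons_of_ne hts (r c2 hc2)
      rw [e1, e2] at hf
      simp only [Walk.getVert_cons_succ, Walk.getVert_zero] at hf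
      subst hf
      have hp1 : r1'.IsPath := by
        have := hrP c1 hc1; rw [e1, Walk.cons_isPath_iff] at this; exact this.1
      have hp2 : r2'.IsPath := by
        have := hrP c2 hc2; rw [e2, Walk.cons_isPath_iff] at this; exact this.1
      have hl1 : r1'.length = 3 := by
        have := hrL c1 hc1; rw [e1] at this
        simp only [Walk.length_cons] at this ⊢; omega
      have hl2 : r2'.length = 3 := by
        have := hrL c2 hc2; rw [e2] at this
        simp only [Walk.length_cons] at this ⊢; omega
      have hr12' : r1' = r2' := pathUnique r1' r2' hp1 hp2 (by omega)
      have hr12 : r c1 hc1 = r c2 hc2 := by rw [e1, e2, hr12']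
      have hc12 : c1 = c2 := by
        rw [← hrS c1 hc1, ← hrS c2 hc2, hr12]
      exact Subtype.ext hc12
    calc S.ncard = Nat.card ↥S := (Nat.card_coe_set_eq S).symm
      _ ≤ Nat.card ↥(G.neighborSet t \ {v3}) := Nat.card_le_card_of_injective _ hinj
      _ = 2 := by rw [Nat.card_coe_set_eq]; exact hTcard
  · -- P₄ : path on 4 vertices, at most 4 cycles
    rintro p ⟨s, t, u, hu, hulen, rfl⟩
    have hul3 : u.length = 3 := by omega
    obtain ⟨v1, v2, h1, h2, h3, rfl⟩ := EgrAux.decomp3 u hul3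
    set u : G.Walk s t := Walk.cons h1 (Walk.cons h2 (Walk.cons h3 Walk.nil)) with hudef
    have hts : t ≠ s := (EgrAux.path_ends_ne u hu (by omega)).symm
    have hv2 : v2 ∈ G.neighborSet t := h3.symm
    have hv1 : v1 ∈ G.neighborSet s := h1
    have hT1card : ((G.neighborSet t) \ {v2}).ncard = 2 := by
      rw [Set.ncard_diff_singleton_of_mem hv2, hreg t]
    have hT2card : ((G.neighborSet s) \ {v1}).ncard = 2 := by
      rw [Set.ncard_diff_singleton_of_mem hv1, hreg s]
    haveI : Finite ↥((G.neighborSet t) \ {v2}) := ((hNfin t).diff).to_subtype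
    haveI : Finite ↥((G.neighborSet s) \ {v1}) := ((hNfin s).diff).to_subtype
    set S := {c : G.Subgraph | IsCycleSub G 8 c ∧ u.toSubgraph ≤ c} with hSdef
    have key' := key u hu (by omega)
    choose r hrP hrL hrS hrD using key'
    have hrlen : ∀ (c : G.Subgraph) (hc : c ∈ S), (r c hc).length = 5 := by
      intro c hc; have := hrL c hc; omega
    have hmem1 : ∀ (c : G.Subgraph) (hc : c ∈ S),
        (r c hc).getVert 1 ∈ G.neighborSet t \ {v2} := by
      intro c hc
      constructor
      · have h0 : 0 < (r c hc).length := by rw [hrlen c hc]; omega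
        have hadj := Walk.toSubgraph_adj_getVert (r c hc) h0
        rw [Walk.getVert_zero] at hadj
        exact hadj.adj_sub
      · simp only [Set.mem_singleton_iff]
        intro heq
        obtain ⟨x, hx, r', hr'⟩ := Walk.exists_eq_cons_of_ne hts (r c hc)
        have hxmem : (r c hc).getVert 1 ∈ (r c hc).support.tail := by
          rw [hr']
          simp [Walk.getVert_cons_succ, Walk.support_cons]
        have hv2mem : v2 ∈ u.support.tail := by simp [hudef, Walk.support_cons]
        exact hrD c hc v2 hv2mem (heq ▸ hxmem)
    have hmem2 : ∀ (c : G.Subgraph) (hc : c ∈ S),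
        (r c hc).getVert 4 ∈ G.neighborSet s \ {v1} := by
      intro c hc
      constructor
      · have h4' : (4 : ℕ) < (r c hc).length := by rw [hrlen c hc]; omega
        have hadj := Walk.toSubgraph_adj_getVert (r c hc) h4'
        have h5' : (r c hc).getVert 5 = s := by
          have hh := (r c hc).getVert_length
          rwa [hrlen c hc] at hh
        rw [show (4 : ℕ) + 1 = 5 from rfl, h5'] at hadj
        exact hadj.adj_sub.symm
      · simp only [Set.mem_singleton_iff]
        intro heq
        obtain ⟨x, a', b', y, k1, k2, k3, k4, k5, e⟩ := EgrAux.decomp5 (r c hc) (hrlen c hc)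
        have hymem : (r c hc).getVert 4 ∈ (r c hc).support.tail := by
          rw [e]
          simp [Walk.support_cons]
        have hv1mem : v1 ∈ u.support.tail := by simp [hudef, Walk.support_cons]
        exact hrD c hc v1 hv1mem (heq ▸ hymem)
    have hinj : Function.Injective
        (fun c : ↥S => ((⟨(r c.1 c.2).getVert 1, hmem1 c.1 c.2⟩ :
            ↥(G.neighborSet t \ {v2})),
          (⟨(r c.1 c.2).getVert 4, hmem2 c.1 c.2⟩ : ↥(G.neighborSet s \ {v1})))) := by
      rintro ⟨c1, hc1⟩ ⟨c2, hc2⟩ hf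
      simp only [Prod.mk.injEq, Subtype.mk.injEq] at hf
      obtain ⟨hf1, hf4⟩ := hf
      obtain ⟨x1, a1, b1, y1, k1, k2, k3, k4, k5, e1⟩ := EgrAux.decomp5 (r c1 hc1) (hrlen c1 hc1)
      obtain ⟨x2, a2, b2, y2, l1, l2, l3, l4, l5, e2⟩ := EgrAux.decomp5 (r c2 hc2) (hrlen c2 hc2)
      rw [e1, e2] at hf1 hf4
      simp only [Walk.getVert_cons_succ, Walk.getVert_zero] at hf1 hf4
      subst hf1
      subst hf4
      have hp1 := hrP c1 hc1
      have hp2 := hrP c2 hc2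
      rw [e1] at hp1
      rw [e2] at hp2
      simp only [Walk.cons_isPath_iff, Walk.support_cons, Walk.support_nil,
        List.mem_cons, List.mem_singleton, Walk.isPath_iff_eq_nil] at hp1 hp2
      have hm1 : (Walk.cons k2 (Walk.cons k3 (Walk.cons k4 Walk.nil)) : G.Walk x1 y1).IsPath := by
        simp only [Walk.cons_isPath_iff, Walk.support_cons, Walk.support_nil,
          List.mem_cons, List.mem_singleton, Walk.isPath_iff_eq_nil]
        tauto
      have hm2 : (Walk.cons l2 (Walk.cons l3 (Walk.cons l4 Walk.nil)) : G.Walk x1 y1).IsPath := by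
        simp only [Walk.cons_isPath_iff, Walk.support_cons, Walk.support_nil,
          List.mem_cons, List.mem_singleton, Walk.isPath_iff_eq_nil]
        tauto
      have hm : (Walk.cons k2 (Walk.cons k3 (Walk.cons k4 Walk.nil)) : G.Walk x1 y1)
          = Walk.cons l2 (Walk.cons l3 (Walk.cons l4 Walk.nil)) :=
        pathUnique _ _ hm1 hm2 (by simp only [Walk.length_cons, Walk.length_nil]; omega)
      have ha : a1 = a2 := by
        have := congrArg (fun w : G.Walk x1 y1 => w.getVert 1) hm
        simpa using this
      subst ha
      have hb : b1 = b2 := by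
        have := congrArg (fun w : G.Walk x1 y1 => w.getVert 2) hm
        simpa using this
      subst hb
      have hr12 : r c1 hc1 = r c2 hc2 := by rw [e1, e2]
      have hc12 : c1 = c2 := by rw [← hrS c1 hc1, ← hrS c2 hc2, hr12]
      exact Subtype.ext hc12
    calc S.ncard = Nat.card ↥S := (Nat.card_coe_set_eq S).symm
      _ ≤ Nat.card (↥(G.neighborSet t \ {v2}) × ↥(G.neighborSet s \ {v1})) :=
          Nat.card_le_card_of_injective _ hinj
      _ = 4 := by
          rw [Nat.card_prod, Nat.card_coe_set_eq, Nat.card_coe_set_eq, hT1card, hT2card]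
end
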